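/- arXiv:2008.10617 — 6 statements merged into one kernel-verified Lean document; each statement's English description precedes it below -/
import Mathlib

section
/- Let R be a quantum channel from d×d matrices to m×m matrices and let τ = (id_d ⊗ R)(Φ⁺), where Φ⁺ is the density matrix of the maximally entangled state on ℂ^d ⊗ ℂ^d. Then R is a measurement (i.e., there exist density matrices ρ, σ with R(ρ) ≠ R(σ)) if and only if τ is not a product state, i.e. τ ≠ (tr_O τ) ⊗ (tr_A τ), where tr_O is the partial trace over the second (m-dimensional) factor and tr_A the partial trace over the first (d-dimensional) factor. -/
open Matrix Kronecker
open scoped ComplexOrder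

noncomputable section

abbrev Mat (n : ℕ) := Matrix (Fin n) (Fin n) ℂ

/-- A density matrix: positive semidefinite with trace 1. -/
def IsDensity {n : Type*} [Fintype n] (ρ : Matrix n n ℂ) : Prop :=
  ρ.PosSemidef ∧ ρ.trace = 1

/-- The rank-one projector `|ψ⟩⟨ψ|`. -/
def proj {n : Type*} (ψ : n → ℂ) : Matrix n n ℂ :=
  Matrix.of fun i j => ψ i * star (ψ j)

/-- Partial trace over the first tensor factor. -/
def trFst {a b : Type*} [Fintype a] (X : Matrix (a × b) (a × b) ℂ) : Matrix b b ℂ :=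
  Matrix.of fun j l => ∑ i : a, X (i, j) (i, l)

/-- Partial trace over the second tensor factor. -/
def trSnd {a b : Type*} [Fintype b] (X : Matrix (a × b) (a × b) ℂ) : Matrix a a ℂ :=
  Matrix.of fun i k => ∑ j : b, X (i, j) (k, j)

/-- `id ⊗ Φ` acting on matrices over a product index type. -/
def idTensor {k d m : Type*} (Φ : Matrix d d ℂ → Matrix m m ℂ)
    (X : Matrix (k × d) (k × d) ℂ) : Matrix (k × m) (k × m) ℂ :=
  Matrix.of fun p q => Φ (Matrix.of fun j l => X (p.1, j) (q.1, l)) p.2 q.2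

/-- Complete positivity. -/
def IsCP {d m : ℕ} (Φ : Mat d → Mat m) : Prop :=
  ∀ (k : ℕ) (X : Matrix (Fin k × Fin d) (Fin k × Fin d) ℂ),
    X.PosSemidef → (idTensor Φ X).PosSemidef

/-- Trace preservation. -/
def IsTP {d m : ℕ} (Φ : Mat d → Mat m) : Prop :=
  ∀ X, (Φ X).trace = X.trace

/-- A quantum channel: linear, completely positive, trace preserving. -/
def IsChannel {d m : ℕ} (Φ : Mat d → Mat m) : Prop :=
  IsLinearMap ℂ Φ ∧ IsCP Φ ∧ IsTP Φ

/-- The maximally entangled unit vector `|Φ⁺⟩ = (1/√d) ∑ₖ |k⟩⊗|k⟩`. -/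
def phiPlusVec (d : ℕ) : Fin d × Fin d → ℂ :=
  fun p => if p.1 = p.2 then ((Real.sqrt d : ℝ) : ℂ)⁻¹ else 0

/-- The density matrix of the maximally entangled state. -/
def phiPlus (d : ℕ) : Matrix (Fin d × Fin d) (Fin d × Fin d) ℂ :=
  proj (phiPlusVec d)

/-- Von Neumann entropy `S(ρ) = -∑ λᵢ log λᵢ` over the eigenvalues of `ρ`. -/
def entropy {n : Type*} [Fintype n] [DecidableEq n] (ρ : Matrix n n ℂ) : ℝ :=
  if h : ρ.IsHermitian then -∑ i, h.eigenvalues i * Real.log (h.eigenvalues i) else 0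

/-- Quantum mutual information of a bipartite state. -/
def mutualInfo {a b : Type*} [Fintype a] [Fintype b] [DecidableEq a] [DecidableEq b]
    (τ : Matrix (a × b) (a × b) ℂ) : ℝ :=
  entropy (trSnd τ) + entropy (trFst τ) - entropy τ

lemma proj_psd {n : Type*} [Fintype n] (ψ : n → ℂ) : (proj ψ).PosSemidef := by
  rw [Matrix.posSemidef_iff_dotProduct_mulVec]
  constructor
  · ext i j
    simp [proj, Matrix.conjTranspose_apply, mul_comm]
  · intro x
    have h : star x ⬝ᵥ (proj ψ *ᵥ x)
        = star (∑ j, star (ψ j) * x j) * (∑ j, star (ψ j) * x j) := by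
      simp [proj, dotProduct, mulVec, Finset.mul_sum, Finset.sum_mul, mul_comm,
        mul_left_comm, mul_assoc]
      exact Finset.sum_comm
    rw [h]
    exact star_mul_self_nonneg _

lemma proj_trace {n : Type*} [Fintype n] (ψ : n → ℂ) :
    (proj ψ).trace = ∑ j, ψ j * star (ψ j) := by
  simp [proj, Matrix.trace, Matrix.diag]

lemma smul_psd {n : Type*} [Fintype n] (c : ℂ) (hc : 0 ≤ c) {M : Matrix n n ℂ}
    (hM : M.PosSemidef) : (c • M).PosSemidef := by
  have hstar : star c = c := by
    have him : c.im = 0 := (Complex.nonneg_iff.1 hc).2.symm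
    exact Complex.conj_eq_iff_im.2 him
  rw [Matrix.posSemidef_iff_dotProduct_mulVec]
  constructor
  · show (c • M)ᴴ = c • M
    rw [Matrix.conjTranspose_smul, hM.1.eq, hstar]
  · intro x
    have h : star x ⬝ᵥ ((c • M) *ᵥ x) = c * (star x ⬝ᵥ (M *ᵥ x)) := by
      simp [Matrix.smul_mulVec, dotProduct_smul]
    rw [h]
    exact mul_nonneg hc (hM.dotProduct_mulVec_nonneg x)

lemma phiPlus_slice (d : ℕ) (i k : Fin d) :
    (Matrix.of fun j l => phiPlus d (i, j) (k, l)) = (d : ℂ)⁻¹ • Matrix.single i k (1 : ℂ) := by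
  have hc : ((Real.sqrt d : ℝ) : ℂ)⁻¹ * ((Real.sqrt d : ℝ) : ℂ)⁻¹ = (d : ℂ)⁻¹ := by
    rw [← mul_inv, ← Complex.ofReal_mul, Real.mul_self_sqrt (by positivity)]
    norm_num
  ext j l
  by_cases h1 : i = j <;> by_cases h2 : k = l <;>
    simp [phiPlus, proj, phiPlusVec, Matrix.single, h1, h2, hc, Complex.star_def,
      Complex.conj_ofReal]

/-- `vv i k a b` is the vector `a eᵢ + b eₖ`. -/
def vv {d : ℕ} (i k : Fin d) (a b : ℂ) : Fin d → ℂ :=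
  fun j => if j = i then a else if j = k then b else 0

lemma basis_density {d : ℕ} (i : Fin d) : IsDensity (Matrix.single i i (1 : ℂ)) := by
  have h : Matrix.single i i (1 : ℂ) = proj (fun j => if j = i then 1 else 0) := by
    ext a b
    by_cases h1 : i = a <;> by_cases h2 : i = b <;>
      simp [proj, Matrix.single, h1, h2, eq_comm]
  rw [h]
  refine ⟨proj_psd _, ?_⟩
  rw [proj_trace]
  simp

lemma two_nonneg : (0 : ℂ) ≤ 2⁻¹ := by
  rw [Complex.nonneg_iff]
  norm_num

lemma offdiag_density {d : ℕ} (i k : Fin d) (hik : i ≠ k) (b : ℂ) (hb : b * star b = 1) :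
    IsDensity ((2 : ℂ)⁻¹ • proj (vv i k 1 b)) := by
  refine ⟨smul_psd _ two_nonneg (proj_psd _), ?_⟩
  rw [Matrix.trace_smul, proj_trace]
  have key : ∀ j, vv i k 1 b j * star (vv i k 1 b j)
      = (if j = i then 1 else 0) + (if j = k then b * star b else 0) := by
    intro j
    by_cases h1 : j = i <;> by_cases h2 : j = k
    · exact absurd (h1.symm.trans h2) hik
    all_goals simp [vv, h1, h2, hik, Ne.symm hik, hb]
  rw [Finset.sum_congr rfl fun j _ => key j, Finset.sum_add_distrib]
  have hb' : b * (starRingEnd ℂ) b = 1 := hb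
  simp [hb', smul_eq_mul]
  norm_num

lemma offdiag_decomp {d : ℕ} (i k : Fin d) (hik : i ≠ k) :
    Matrix.single i k (1 : ℂ) =
      (2 : ℂ)⁻¹ • (((2 : ℂ)⁻¹ • proj (vv i k 1 1)) - ((2 : ℂ)⁻¹ • proj (vv i k 1 (-1))))
        + (Complex.I * 2⁻¹) • (((2 : ℂ)⁻¹ • proj (vv i k 1 Complex.I))
            - ((2 : ℂ)⁻¹ • proj (vv i k 1 (-Complex.I)))) := by
  ext j l
  by_cases h1 : i = j <;> by_cases h2 : k = j <;> by_cases h3 : i = l <;> by_cases h4 : k = l <;>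
    (subst_vars
     first
       | exact absurd rfl hik
       | (simp only [proj, vv, Matrix.single, Matrix.smul_apply, Matrix.sub_apply,
            Matrix.add_apply, Matrix.of_apply, smul_eq_mul, eq_comm]
          simp [*, hik, Ne.symm hik, Complex.star_def, Complex.conj_I]
          try ring_nf
          try simp [Complex.I_sq]
          try norm_num
          try (split_ifs <;> ring)))

/-- A channel is a measurement iff its Choi-type state `(id ⊗ R)(Φ⁺)` is not a product state. -/
theorem stmt_1 (d m : ℕ) (R : Mat d → Mat m) (hR : IsChannel R)
    (τ : Matrix (Fin d × Fin m) (Fin d × Fin m) ℂ)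
    (hτ : τ = idTensor R (phiPlus d)) :
    (∃ ρ σ : Mat d, IsDensity ρ ∧ IsDensity σ ∧ R ρ ≠ R σ) ↔
      τ ≠ (trSnd τ) ⊗ₖ (trFst τ) := by
  obtain ⟨hlin, _hcp, htp⟩ := hR
  let L : Mat d →ₗ[ℂ] Mat m := IsLinearMap.mk' R hlin
  have hL : ∀ X, R X = L X := fun _ => rfl
  have key : ∀ (i k : Fin d) (p q : Fin m),
      τ (i, p) (k, q) = (d : ℂ)⁻¹ * R (Matrix.single i k 1) p q := by
    intro i k p q
    rw [hτ]
    show R (Matrix.of fun j l => phiPlus d (i, j) (k, l)) p q = _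
    rw [phiPlus_slice, hL, L.map_smul, ← hL]
    simp [Matrix.smul_apply, smul_eq_mul]
  have traceE : ∀ i k : Fin d, (Matrix.single i k (1 : ℂ)).trace = if i = k then 1 else 0 := by
    intro i k
    rcases eq_or_ne i k with rfl | h
    · simp [Matrix.trace, Matrix.diag, Matrix.single]
    · rw [if_neg h]
      apply Finset.sum_eq_zero
      intro j _
      simp only [Matrix.diag, Matrix.single, Matrix.of_apply]
      rw [if_neg]
      rintro ⟨rfl, rfl⟩
      exact h rfl
  have htrSnd : ∀ i k : Fin d, trSnd τ i k = (d : ℂ)⁻¹ * (if i = k then 1 else 0) := by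
    intro i k
    show ∑ j : Fin m, τ (i, j) (k, j) = _
    rw [Finset.sum_congr rfl fun j _ => key i k j j, ← Finset.mul_sum]
    have ht : ∑ j : Fin m, R (Matrix.single i k 1) j j = (R (Matrix.single i k 1)).trace := by
      simp [Matrix.trace, Matrix.diag]
    rw [ht, htp, traceE]
  have hone : (1 : Mat d) = ∑ i : Fin d, Matrix.single i i (1 : ℂ) := by
    ext a b
    rcases eq_or_ne a b with rfl | h
    · simp [Matrix.sum_apply, Matrix.single, Matrix.one_apply]
    · rw [Matrix.one_apply_ne h, Matrix.sum_apply]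
      apply (Finset.sum_eq_zero _).symm
      intro j _
      simp only [Matrix.single, Matrix.of_apply]
      rw [if_neg]
      rintro ⟨rfl, rfl⟩
      exact h rfl
  have htrFst : ∀ p q : Fin m, trFst τ p q = (d : ℂ)⁻¹ * R 1 p q := by
    intro p q
    show ∑ i : Fin d, τ (i, p) (i, q) = _
    rw [Finset.sum_congr rfl fun i _ => key i i p q, ← Finset.mul_sum]
    congr 1
    have : ∑ i : Fin d, R (Matrix.single i i 1) p q
        = (∑ i : Fin d, L (Matrix.single i i 1)) p q := by
      rw [Matrix.sum_apply]
      exact Finset.sum_congr rfl fun i _ => by rw [hL]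
    rw [this, ← map_sum, ← hone, ← hL]
  constructor
  · rintro ⟨ρ, σ, hρ, hσ, hne⟩ heq
    apply hne
    have hd : 0 < d := by
      by_contra h0
      push_neg at h0
      have hd0 : d = 0 := Nat.le_zero.mp h0
      subst hd0
      have := hρ.2
      simp [Matrix.trace] at this
    have hdC : ((d : ℂ))⁻¹ ≠ 0 := inv_ne_zero (Nat.cast_ne_zero.mpr hd.ne')
    have hE : ∀ i k : Fin d, R (Matrix.single i k 1)
        = ((if i = k then (1 : ℂ) else 0) * (d : ℂ)⁻¹) • R 1 := by
      intro i k
      ext p q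
      have h1 : τ (i, p) (k, q) = (trSnd τ ⊗ₖ trFst τ) (i, p) (k, q) := by rw [← heq]
      rw [key, Matrix.kroneckerMap_apply] at h1
      have h1' : (d : ℂ)⁻¹ * R (Matrix.single i k 1) p q
          = (d : ℂ)⁻¹ * ((if i = k then 1 else 0) * (d : ℂ)⁻¹ * R 1 p q) := by
        rw [h1]
        show trSnd τ i k * trFst τ p q = _
        rw [htrSnd, htrFst]
        ring
      have h2 := mul_left_cancel₀ hdC h1'
      rw [h2, Matrix.smul_apply, smul_eq_mul]
      try ring
    have hval : ∀ ρ' : Mat d, IsDensity ρ' → R ρ' = (d : ℂ)⁻¹ • R 1 := by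
      intro ρ' hρ'
      have hdec : ρ' = ∑ i : Fin d, ∑ k : Fin d, (ρ' i k) • Matrix.single i k (1 : ℂ) := by
        conv_lhs => rw [matrix_eq_sum_single ρ']
        exact Finset.sum_congr rfl fun i _ => Finset.sum_congr rfl fun k _ => by
          rw [smul_single, smul_eq_mul, mul_one]
      have step1 : R ρ' = ∑ i : Fin d, ∑ k : Fin d, (ρ' i k) • R (Matrix.single i k 1) := by
        conv_lhs => rw [hL, hdec]
        rw [map_sum]
        refine Finset.sum_congr rfl fun i _ => ?_
        rw [map_sum]
        refine Finset.sum_congr rfl fun k _ => ?_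
        rw [L.map_smul, ← hL]
      rw [step1]
      have step2 : ∀ i : Fin d, ∑ k : Fin d, (ρ' i k) • R (Matrix.single i k 1)
          = ρ' i i • ((d : ℂ)⁻¹ • R 1) := by
        intro i
        rw [Finset.sum_eq_single_of_mem i (Finset.mem_univ i) (fun k _ hk => by
          rw [hE i k]
          simp [Ne.symm hk])]
        rw [hE i i]
        simp
      rw [Finset.sum_congr rfl fun i _ => step2 i, ← Finset.sum_smul]
      have htr : ∑ i : Fin d, ρ' i i = (1 : ℂ) := by
        have : ∑ i : Fin d, ρ' i i = ρ'.trace := by simp [Matrix.trace, Matrix.diag]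
        rw [this, hρ'.2]
      rw [htr, one_smul]
    rw [hval ρ hρ, hval σ hσ]
  · intro hne
    by_contra hcon
    push_neg at hcon
    apply hne
    rcases Nat.eq_zero_or_pos d with rfl | hd
    · ext x y
      exact x.1.elim0
    set i0 : Fin d := ⟨0, hd⟩ with hi0
    have hdiag : ∀ i : Fin d, R (Matrix.single i i 1) = R (Matrix.single i0 i0 1) :=
      fun i => hcon _ _ (basis_density i) (basis_density i0)
    have hoff : ∀ i k : Fin d, i ≠ k → R (Matrix.single i k 1) = 0 := by
      intro i k hik
      have h1 : R ((2 : ℂ)⁻¹ • proj (vv i k 1 1)) = R ((2 : ℂ)⁻¹ • proj (vv i k 1 (-1))) :=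
        hcon _ _ (offdiag_density i k hik 1 (by norm_num))
          (offdiag_density i k hik (-1) (by norm_num))
      have h2 : R ((2 : ℂ)⁻¹ • proj (vv i k 1 Complex.I))
          = R ((2 : ℂ)⁻¹ • proj (vv i k 1 (-Complex.I))) :=
        hcon _ _ (offdiag_density i k hik Complex.I
            (by simp [Complex.star_def, Complex.conj_I, Complex.I_mul_I]))
          (offdiag_density i k hik (-Complex.I)
            (by simp [Complex.star_def, Complex.conj_I]; try ring_nf; try simp [Complex.I_sq]))
      rw [hL, offdiag_decomp i k hik, map_add, L.map_smul, L.map_smul, map_sub, map_sub,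
        ← hL, ← hL, ← hL, ← hL, h1, h2]
      simp
    have hRall : ∀ i k : Fin d, R (Matrix.single i k (1 : ℂ))
        = (if i = k then 1 else 0) • R (Matrix.single i0 i0 1) := by
      intro i k
      rcases eq_or_ne i k with rfl | h
      · simp [hdiag i]
      · simp [h, hoff i k h]
    have hR1 : R 1 = (d : ℂ) • R (Matrix.single i0 i0 1) := by
      rw [hL, hone, map_sum]
      rw [Finset.sum_congr rfl fun i _ => by rw [← hL, hdiag i]]
      rw [Finset.sum_const, Finset.card_univ, Fintype.card_fin, ← Nat.cast_smul_eq_nsmul ℂ]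
    ext ⟨i, p⟩ ⟨k, q⟩
    rw [key, Matrix.kroneckerMap_apply]
    show _ = trSnd τ i k * trFst τ p q
    rw [htrSnd, htrFst, hRall, hR1]
    have hdC : ((d : ℂ)) ≠ 0 := Nat.cast_ne_zero.mpr hd.ne'
    rcases eq_or_ne i k with rfl | h
    · simp only [if_pos rfl, Matrix.smul_apply, smul_eq_mul, one_mul]
      field_simp
      try ring
      simp
    · simp [h, Matrix.smul_apply]

end
end

section
/- Let τ be a density matrix on ℂ^d ⊗ ℂ^m whose first marginal is maximally mixed, tr_O τ = (1/d) I_d. Then τ is a product state, τ = (tr_O τ) ⊗ (tr_A τ), if and only if for every rank-one orthogonal projector Π on ℂ^d one has tr_A((Π ⊗ I_m) τ) = (1/d) · tr_A(τ). -/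
open Matrix Kronecker
open scoped ComplexOrder

noncomputable section

lemma quad_zero {n : Type*} [Fintype n] [DecidableEq n] (B : Matrix n n ℂ)
    (h : ∀ v : n → ℂ, star v ⬝ᵥ B *ᵥ v = 0) : B = 0 := by
  have hT : Matrix.toEuclideanLin B = 0 := by
    rw [← inner_map_self_eq_zero]
    intro x
    have h1 : (inner ℂ (Matrix.toEuclideanLin B x) x : ℂ)
        = starRingEnd ℂ (star (⇑x) ⬝ᵥ B *ᵥ ⇑x) := by
      simp [PiLp.inner_apply, Matrix.toEuclideanLin_apply, dotProduct, map_sum,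
        RCLike.inner_apply, mul_comm]
    rw [h1, h, map_zero]
  exact (LinearEquiv.map_eq_zero_iff _).mp hT

lemma key (d m : ℕ) (τ : Matrix (Fin d × Fin m) (Fin d × Fin m) ℂ) (v : Fin d → ℂ)
    (j l : Fin m) :
    trFst ((proj v ⊗ₖ (1 : Mat m)) * τ) j l
      = ∑ i, ∑ k, v i * star (v k) * τ (k, j) (i, l) := by
  simp only [trFst, Matrix.of_apply, Matrix.mul_apply, Fintype.sum_prod_type,
    kroneckerMap_apply, proj, Matrix.one_apply]
  refine Finset.sum_congr rfl fun i _ => Finset.sum_congr rfl fun k _ => ?_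
  simp [mul_ite, ite_mul]

/-- For a bipartite state with maximally mixed first marginal: it is a product state iff
every rank-one projector on the first system steers the second system to the same state. -/
theorem stmt_3 (d m : ℕ) (τ : Matrix (Fin d × Fin m) (Fin d × Fin m) ℂ)
    (hτ : IsDensity τ) (hmarg : trSnd τ = ((d : ℂ))⁻¹ • 1) :
    τ = (trSnd τ) ⊗ₖ (trFst τ) ↔
      ∀ v : Fin d → ℂ, star v ⬝ᵥ v = 1 →
        trFst ((proj v ⊗ₖ (1 : Mat m)) * τ) = ((d : ℂ))⁻¹ • trFst τ := by
  constructor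
  · -- forward
    intro hprod v hv
    ext j l
    rw [key d m τ v j l]
    have hτ' : ∀ (k i : Fin d) (j' l' : Fin m),
        τ (k, j') (i, l') = (if k = i then ((d : ℂ))⁻¹ else 0) * trFst τ j' l' := by
      intro k i j' l'
      conv_lhs => rw [hprod, hmarg]
      simp [kroneckerMap_apply, Matrix.one_apply, ite_mul,
        Matrix.smul_apply, smul_eq_mul]
    simp only [hτ']
    have step : (∑ i, ∑ k, v i * star (v k) *
          ((if k = i then ((d : ℂ))⁻¹ else 0) * trFst τ j l))
        = (star v ⬝ᵥ v) * (((d : ℂ))⁻¹ * trFst τ j l) := by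
      rw [dotProduct, Finset.sum_mul]
      refine Finset.sum_congr rfl fun i _ => ?_
      simp only [mul_ite, ite_mul, mul_zero, zero_mul, Finset.sum_ite_eq',
        Finset.mem_univ, if_true, Pi.star_apply]
      ring
    rw [step, hv, one_mul]
    simp [Matrix.smul_apply, smul_eq_mul]
  · -- backward
    intro h
    have hQ : ∀ (j l : Fin m) (v : Fin d → ℂ),
        (∑ i, ∑ k, v i * star (v k) * τ (k, j) (i, l))
          = (star v ⬝ᵥ v) * (((d : ℂ))⁻¹ * trFst τ j l) := by
      intro j l v
      by_cases hv : v = 0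
      · simp [hv]
      · set S : ℝ := ∑ i, Complex.normSq (v i) with hS
        have hSpos : 0 < S := by
          have hex : ∃ i, v i ≠ 0 := by
            by_contra hc; push_neg at hc; exact hv (funext hc)
          obtain ⟨i0, hi0⟩ := hex
          exact Finset.sum_pos' (fun i _ => Complex.normSq_nonneg _)
            ⟨i0, Finset.mem_univ _, Complex.normSq_pos.2 hi0⟩
        have hSne : (S : ℂ) ≠ 0 := by
          exact_mod_cast Complex.ofReal_ne_zero.2 hSpos.ne'
        set t : ℝ := Real.sqrt S with ht
        have hts : (t : ℂ) * (t : ℂ) = (S : ℂ) := by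
          rw [← Complex.ofReal_mul, Real.mul_self_sqrt hSpos.le]
        set c : ℂ := ((t : ℝ) : ℂ)⁻¹ with hc
        have hcstar : star c = c := by
          simp [hc, Complex.star_def, map_inv₀, Complex.conj_ofReal]
        have hccS : c * c * (S : ℂ) = 1 := by
          rw [hc, ← mul_inv, hts]
          exact inv_mul_cancel₀ hSne
        set w : Fin d → ℂ := fun i => c * v i with hw
        have hsv : star v ⬝ᵥ v = (S : ℂ) := by
          rw [hS, dotProduct]
          push_cast
          refine Finset.sum_congr rfl fun i _ => ?_
          simp [Pi.star_apply, Complex.normSq_eq_conj_mul_self, Complex.star_def]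
        have hwunit : star w ⬝ᵥ w = 1 := by
          have : star w ⬝ᵥ w = c * c * (star v ⬝ᵥ v) := by
            rw [dotProduct, dotProduct, Finset.mul_sum]
            refine Finset.sum_congr rfl fun i _ => ?_
            simp only [hw, Pi.star_apply, star_mul', hcstar]
            ring
          rw [this, hsv, hccS]
        have hentry : c * c * (∑ i, ∑ k, v i * star (v k) * τ (k, j) (i, l))
            = ((d : ℂ))⁻¹ * trFst τ j l := by
          have he := congrFun (congrFun (h w hwunit) j) l
          rw [key d m τ w j l] at he
          simp only [Matrix.smul_apply, smul_eq_mul] at he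
          rw [← he, Finset.mul_sum]
          refine Finset.sum_congr rfl fun i _ => ?_
          rw [Finset.mul_sum]
          refine Finset.sum_congr rfl fun k _ => ?_
          simp only [hw, star_mul', hcstar]
          ring
        calc (∑ i, ∑ k, v i * star (v k) * τ (k, j) (i, l))
            = (c * c * (S : ℂ)) * (∑ i, ∑ k, v i * star (v k) * τ (k, j) (i, l)) := by
              rw [hccS, one_mul]
          _ = (S : ℂ) * (c * c * (∑ i, ∑ k, v i * star (v k) * τ (k, j) (i, l))) := by ring
          _ = (S : ℂ) * (((d : ℂ))⁻¹ * trFst τ j l) := by rw [hentry]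
          _ = (star v ⬝ᵥ v) * (((d : ℂ))⁻¹ * trFst τ j l) := by rw [hsv]
    ext ⟨k, j⟩ ⟨i, l⟩
    have hB0 : (Matrix.of fun k i => τ (k, j) (i, l) -
        (if k = i then ((d : ℂ))⁻¹ * trFst τ j l else 0) : Matrix (Fin d) (Fin d) ℂ) = 0 := by
      apply quad_zero
      intro v
      have hq := hQ j l v
      have h1 : star v ⬝ᵥ (Matrix.of fun k i => τ (k, j) (i, l) -
          (if k = i then ((d : ℂ))⁻¹ * trFst τ j l else 0) : Matrix (Fin d) (Fin d) ℂ) *ᵥ v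
          = (∑ k, ∑ i, star (v k) * (τ (k, j) (i, l) * v i))
            - (star v ⬝ᵥ v) * (((d : ℂ))⁻¹ * trFst τ j l) := by
        simp only [dotProduct, mulVec, Matrix.of_apply, Pi.star_apply, dotProduct,
          sub_mul, mul_sub, Finset.mul_sum, Finset.sum_sub_distrib]
        congr 1
        rw [Finset.sum_mul]
        refine Finset.sum_congr rfl fun k _ => ?_
        simp [mul_ite, ite_mul, Finset.mul_sum]
        ring
      have h2 : (∑ k, ∑ i, star (v k) * (τ (k, j) (i, l) * v i))
          = ∑ i, ∑ k, v i * star (v k) * τ (k, j) (i, l) := by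
        rw [Finset.sum_comm]
        refine Finset.sum_congr rfl fun i _ => Finset.sum_congr rfl fun k _ => ?_
        ring
      rw [h1, h2, hq, sub_self]
    have := congrFun (congrFun hB0 k) i
    simp only [Matrix.of_apply, Matrix.zero_apply, sub_eq_zero] at this
    rw [this, hmarg]
    simp [kroneckerMap_apply, Matrix.one_apply, ite_mul,
      Matrix.smul_apply, smul_eq_mul]


end
end

section
/- Consider a measurement procedure given by a unitary U on ℂ^d ⊗ ℂ^e ⊗ ℂ^o and a density matrix χ on ℂ^e ⊗ ℂ^o, with result channel R(ρ) = tr_{SE}[U(ρ⊗χ)U†] and disturbance channel D(ρ) = tr_{EO}[U(ρ⊗χ)U†]. Let Φ⁺ be the maximally entangled state on ℂ^d ⊗ ℂ^d (ancilla A and system S). If there exist density matrices ρ, σ on ℂ^d with R(ρ) ≠ R(σ) (i.e., the procedure is a measurement), then I_{A:S}((id_d ⊗ D)(Φ⁺)) < 2 log d; equivalently, the back-action B[M] = 2 log d − I_{A:S}((id_d ⊗ D)(Φ⁺)) is strictly positive: every measurement has nonzero back-action. -/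
open Matrix Kronecker
open scoped ComplexOrder

noncomputable section

/-- Partial trace over the first two factors of a tripartite matrix on `S ⊗ E ⊗ O`. -/
def trSE {d e o : Type*} [Fintype d] [Fintype e]
    (X : Matrix (d × e × o) (d × e × o) ℂ) : Matrix o o ℂ :=
  Matrix.of fun j l => ∑ i : d, ∑ k : e, X (i, k, j) (i, k, l)

/-! ### Auxiliary lemmas -/

open scoped MatrixOrder in
lemma psd_eq_conjTranspose_mul_self_aux {n : Type*} [Fintype n] {A : Matrix n n ℂ}
    (hA : A.PosSemidef) : ∃ B : Matrix n n ℂ, A = Bᴴ * B := by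
  classical
  obtain ⟨B, rfl⟩ := CStarAlgebra.nonneg_iff_eq_star_mul_self.mp hA.nonneg
  exact ⟨B, by rw [Matrix.star_eq_conjTranspose]⟩

section PartialTrace

variable {a b : Type*} [Fintype a] [Fintype b]

lemma posSemidef_trSnd {X : Matrix (a × b) (a × b) ℂ} (hX : X.PosSemidef) :
    (trSnd X).PosSemidef := by
  obtain ⟨B, rfl⟩ := psd_eq_conjTranspose_mul_self_aux hX
  have h : trSnd (Bᴴ * B) =
      (Matrix.of fun (jr : b × (a × b)) (p : a) => B jr.2 (p, jr.1))ᴴ *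
      (Matrix.of fun (jr : b × (a × b)) (p : a) => B jr.2 (p, jr.1)) := by
    ext p q
    simp [trSnd, Matrix.mul_apply, Fintype.sum_prod_type]
  rw [h]
  exact posSemidef_conjTranspose_mul_self _

lemma posSemidef_trFst {X : Matrix (a × b) (a × b) ℂ} (hX : X.PosSemidef) :
    (trFst X).PosSemidef := by
  obtain ⟨B, rfl⟩ := psd_eq_conjTranspose_mul_self_aux hX
  have h : trFst (Bᴴ * B) =
      (Matrix.of fun (ir : a × (a × b)) (p : b) => B ir.2 (ir.1, p))ᴴ *
      (Matrix.of fun (ir : a × (a × b)) (p : b) => B ir.2 (ir.1, p)) := by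
    ext p q
    simp [trFst, Matrix.mul_apply, Fintype.sum_prod_type]
  rw [h]
  exact posSemidef_conjTranspose_mul_self _

lemma trace_trSnd (X : Matrix (a × b) (a × b) ℂ) : (trSnd X).trace = X.trace := by
  simp [trSnd, Matrix.trace, Matrix.diag, Fintype.sum_prod_type]

lemma trace_trFst (X : Matrix (a × b) (a × b) ℂ) : (trFst X).trace = X.trace := by
  rw [Matrix.trace, Matrix.trace]
  simp only [trFst, Matrix.diag, Matrix.of_apply, Fintype.sum_prod_type]
  rw [Finset.sum_comm]

end PartialTrace

section Entropy

variable {n : Type*} [Fintype n] [DecidableEq n]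

lemma trace_eq_sum_eigenvalues {ρ : Matrix n n ℂ} (h : ρ.IsHermitian) :
    ρ.trace = ((∑ i, h.eigenvalues i : ℝ) : ℂ) := by
  conv_lhs => rw [h.spectral_theorem, Unitary.conjStarAlgAut_apply]
  rw [Matrix.trace_mul_cycle]
  have hu : (star (Matrix.IsHermitian.eigenvectorUnitary h : Matrix n n ℂ)) *
      (Matrix.IsHermitian.eigenvectorUnitary h : Matrix n n ℂ) = 1 := by
    simpa using (unitary.coe_star_mul_self (Matrix.IsHermitian.eigenvectorUnitary h))
  rw [hu, Matrix.one_mul, Matrix.trace_diagonal]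
  push_cast
  rfl

lemma sum_eigenvalues_eq_one {ρ : Matrix n n ℂ} (h : ρ.IsHermitian) (ht : ρ.trace = 1) :
    ∑ i, h.eigenvalues i = 1 := by
  have := (trace_eq_sum_eigenvalues h).symm.trans ht
  exact_mod_cast this

lemma entropy_le_log {ρ : Matrix n n ℂ} (hρ : ρ.PosSemidef) (ht : ρ.trace = 1) :
    entropy ρ ≤ Real.log (Fintype.card n) := by
  have h := hρ.1
  rw [entropy, dif_pos h]
  have hsum : ∑ i, h.eigenvalues i = 1 := sum_eigenvalues_eq_one h ht
  have hcard : 0 < Fintype.card n := by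
    by_contra hc
    have h0 : Fintype.card n = 0 := by omega
    have : IsEmpty n := Fintype.card_eq_zero_iff.mp h0
    rw [Finset.univ_eq_empty, Finset.sum_empty] at hsum
    norm_num at hsum
  have hN0 : (0 : ℝ) < (Fintype.card n : ℝ) := by exact_mod_cast hcard
  have key : ∀ i, h.eigenvalues i - 1 / (Fintype.card n : ℝ) ≤
      h.eigenvalues i * Real.log (Fintype.card n : ℝ)
        + h.eigenvalues i * Real.log (h.eigenvalues i) := by
    intro i
    have hnn := hρ.eigenvalues_nonneg i
    rcases eq_or_lt_of_le hnn with h0 | hpos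
    · rw [← h0]; simp
    · have hNl : 0 < (Fintype.card n : ℝ) * h.eigenvalues i := by positivity
      have hlog := Real.log_le_sub_one_of_pos
        (x := ((Fintype.card n : ℝ) * h.eigenvalues i)⁻¹) (by positivity)
      rw [Real.log_inv] at hlog
      have h1 : 1 - ((Fintype.card n : ℝ) * h.eigenvalues i)⁻¹ ≤
          Real.log ((Fintype.card n : ℝ) * h.eigenvalues i) := by linarith
      have h2 := mul_le_mul_of_nonneg_left h1 (le_of_lt hpos)
      have h3 : h.eigenvalues i * (1 - ((Fintype.card n : ℝ) * h.eigenvalues i)⁻¹) =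
          h.eigenvalues i - 1 / (Fintype.card n : ℝ) := by
        field_simp
      rw [Real.log_mul (ne_of_gt hN0) (ne_of_gt hpos), mul_add, h3] at h2
      linarith
  have hsumle := Finset.sum_le_sum (fun i (_ : i ∈ Finset.univ) => key i)
  rw [Finset.sum_sub_distrib, Finset.sum_add_distrib, hsum, ← Finset.sum_mul, hsum,
    one_mul] at hsumle
  simp only [Finset.sum_const, Finset.card_univ, nsmul_eq_mul] at hsumle
  have hNN : (Fintype.card n : ℝ) * (1 / (Fintype.card n : ℝ)) = 1 := by
    field_simp
  linarith

lemma pure_of_entropy_nonpos {ρ : Matrix n n ℂ} (hρ : ρ.PosSemidef) (ht : ρ.trace = 1)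
    (hS : entropy ρ ≤ 0) :
    ∃ w : n → ℂ, (∑ x, star (w x) * w x) = 1 ∧ ∀ p q, ρ p q = w p * star (w q) := by
  have h := hρ.1
  rw [entropy, dif_pos h] at hS
  have hsum : ∑ i, h.eigenvalues i = 1 := sum_eigenvalues_eq_one h ht
  have hnn := hρ.eigenvalues_nonneg
  have hle1 : ∀ i, h.eigenvalues i ≤ 1 := by
    intro i
    rw [← hsum]
    exact Finset.single_le_sum (fun j _ => hnn j) (Finset.mem_univ i)
  have hterm : ∀ i, h.eigenvalues i * Real.log (h.eigenvalues i) ≤ 0 := by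
    intro i
    rcases eq_or_lt_of_le (hnn i) with h0 | hpos
    · rw [← h0]; simp
    · exact mul_nonpos_of_nonneg_of_nonpos (le_of_lt hpos)
        (Real.log_nonpos (le_of_lt hpos) (hle1 i))
  have hzero : ∀ i, h.eigenvalues i * Real.log (h.eigenvalues i) = 0 := by
    have hsle : ∑ i, h.eigenvalues i * Real.log (h.eigenvalues i) ≤ 0 :=
      Finset.sum_nonpos (fun i _ => hterm i)
    have := Finset.sum_eq_zero_iff_of_nonpos (fun i (_ : i ∈ Finset.univ) => hterm i) |>.mp
      (le_antisymm hsle (by linarith))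
    exact fun i => this i (Finset.mem_univ i)
  have h01 : ∀ i, h.eigenvalues i = 0 ∨ h.eigenvalues i = 1 := by
    intro i
    rcases mul_eq_zero.mp (hzero i) with h0 | hlog
    · exact Or.inl h0
    · rcases Real.log_eq_zero.mp hlog with h0 | h1 | hm1
      · exact Or.inl h0
      · exact Or.inr h1
      · exfalso; have := hnn i; linarith
  have hex : ∃ i, h.eigenvalues i = 1 := by
    by_contra hc
    push_neg at hc
    have hall : ∀ i, h.eigenvalues i = 0 := fun i => (h01 i).resolve_right (hc i)
    rw [Finset.sum_congr rfl (fun i _ => hall i), Finset.sum_const, smul_zero] at hsum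
    norm_num at hsum
  obtain ⟨i, hi⟩ := hex
  have hrest : ∀ j, j ≠ i → h.eigenvalues j = 0 := by
    intro j hj
    by_contra hc
    have hj1 : h.eigenvalues j = 1 := (h01 j).resolve_left hc
    have h2 : ∑ k ∈ ({i, j} : Finset n), h.eigenvalues k = 2 := by
      rw [Finset.sum_pair (Ne.symm hj), hi, hj1]; norm_num
    have hge : (2:ℝ) ≤ ∑ k, h.eigenvalues k := by
      rw [← h2]
      exact Finset.sum_le_sum_of_subset_of_nonneg (Finset.subset_univ _) (fun k _ _ => hnn k)
    rw [hsum] at hge; linarith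
  set V := (Matrix.IsHermitian.eigenvectorUnitary h : Matrix n n ℂ) with hV
  have hμ : ∀ k, ((h.eigenvalues k : ℝ) : ℂ) = if k = i then (1:ℂ) else 0 := by
    intro k
    by_cases hk : k = i
    · subst hk; rw [hi]; simp
    · rw [hrest k hk]; simp [hk]
  refine ⟨fun p => V p i, ?_, ?_⟩
  · have hu : Vᴴ * V = 1 := by
      rw [hV, ← Matrix.star_eq_conjTranspose]
      simpa using (unitary.coe_star_mul_self (Matrix.IsHermitian.eigenvectorUnitary h))
    have h1 := congrFun (congrFun hu i) i
    simp only [Matrix.mul_apply, Matrix.conjTranspose_apply, Matrix.one_apply_eq] at h1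
    rw [← h1]
  · intro p q
    have hst := h.spectral_theorem
    rw [Unitary.conjStarAlgAut_apply, Matrix.star_eq_conjTranspose, ← hV] at hst
    have hentry := congrFun (congrFun hst p) q
    rw [hentry]
    rw [Matrix.mul_apply]
    simp only [Matrix.mul_diagonal, Matrix.conjTranspose_apply, Function.comp_apply]
    have : ∀ k, V p k * (RCLike.ofReal (h.eigenvalues k) : ℂ) * star (V q k)
        = if k = i then V p i * star (V q i) else 0 := by
      intro k
      rw [show (RCLike.ofReal (h.eigenvalues k) : ℂ) = ((h.eigenvalues k : ℝ) : ℂ) from rfl,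
        hμ k]
      by_cases hk : k = i
      · subst hk; simp
      · simp [hk]
    rw [Finset.sum_congr rfl (fun k _ => this k), Finset.sum_ite_eq' Finset.univ i]
    simp

end Entropy

section PureMarginal

lemma pure_marginal_product {α β : Type*} [Fintype α] [Fintype β] [DecidableEq α] [DecidableEq β]
    {Ω : Matrix (α × β) (α × β) ℂ} (hΩ : Ω.PosSemidef) {w : α → ℂ}
    (hw : ∑ x, star (w x) * w x = 1)
    (hm : ∀ x y, (∑ b, Ω (x, b) (y, b)) = w x * star (w y)) :
    ∃ ξ : β → β → ℂ, ∀ x b y c, Ω (x, b) (y, c) = w x * star (w y) * ξ b c := by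
  have herm : ∀ p q, Ω p q = star (Ω q p) := by
    intro p q
    have := congrFun (congrFun hΩ.1 p) q
    rw [← this]; rfl
  -- Step 1
  have key1 : ∀ u : α → ℂ, (∑ a, star (w a) * u a) = 0 →
      ∀ b y c, (∑ x, Ω (y, c) (x, b) * u x) = 0 := by
    intro u hu b₀ y c
    set v : β → (α × β → ℂ) := fun b p => if p.2 = b then u p.1 else 0 with hv
    have ht : ∀ b, star (v b) ⬝ᵥ Ω *ᵥ (v b) =
        ∑ x, ∑ y, star (u x) * Ω (x, b) (y, b) * u y := by
      intro b
      simp only [dotProduct, mulVec, Pi.star_apply, hv, Fintype.sum_prod_type,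
        apply_ite, star_zero, ite_mul, zero_mul, mul_ite, mul_zero, Finset.sum_ite_eq',
        Finset.mem_univ, if_true]
      refine Finset.sum_congr rfl fun x _ => ?_
      rw [Finset.mul_sum]
      exact Finset.sum_congr rfl fun y _ => by ring
    have hsumt : ∑ b, star (v b) ⬝ᵥ Ω *ᵥ (v b) = 0 := by
      rw [Finset.sum_congr rfl fun b _ => ht b]
      rw [Finset.sum_comm]
      have : ∀ x, ∑ b, ∑ y, star (u x) * Ω (x, b) (y, b) * u y
          = star (u x) * w x * (∑ y, star (w y) * u y) := by
        intro x
        rw [Finset.sum_comm]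
        have : ∀ y, ∑ b, star (u x) * Ω (x, b) (y, b) * u y
            = star (u x) * (w x * star (w y)) * u y := by
          intro y
          rw [← Finset.sum_mul, ← Finset.mul_sum, hm x y]
        rw [Finset.sum_congr rfl fun y _ => this y, Finset.mul_sum]
        refine Finset.sum_congr rfl fun y _ => by ring
      rw [Finset.sum_congr rfl fun x _ => this x]
      rw [← Finset.sum_mul, hu, mul_zero]
    have hnn : ∀ b, (0:ℂ) ≤ star (v b) ⬝ᵥ Ω *ᵥ (v b) := fun b => hΩ.dotProduct_mulVec_nonneg (v b)
    have hz : star (v b₀) ⬝ᵥ Ω *ᵥ (v b₀) = 0 := by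
      have := (Finset.sum_eq_zero_iff_of_nonneg
        (fun b (_ : b ∈ Finset.univ) => hnn b)).mp hsumt
      exact this b₀ (Finset.mem_univ b₀)
    have hmv := (hΩ.dotProduct_mulVec_zero_iff (v b₀)).mp hz
    have := congrFun hmv (y, c)
    simp only [mulVec, dotProduct, Pi.zero_apply, Fintype.sum_prod_type, hv] at this
    rw [← this]
    refine Finset.sum_congr rfl fun x _ => ?_
    rw [Finset.sum_eq_single b₀]
    · simp
    · intro b2 _ hb2; simp [hb2]
    · intro hmem; exact absurd (Finset.mem_univ b₀) hmem
  -- Step 2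
  set h : (α × β) → β → ℂ := fun p b => ∑ x', Ω p (x', b) * w x' with hh
  have key2 : ∀ (p : α × β) (x : α) (b : β), Ω p (x, b) = star (w x) * h p b := by
    intro p x b
    have hu : ∑ a, star (w a) * ((if a = x then 1 else 0) - star (w x) * w a) = 0 := by
      simp only [mul_sub]
      rw [Finset.sum_sub_distrib]
      have h1 : ∑ a, star (w a) * (if a = x then (1:ℂ) else 0) = star (w x) := by
        rw [Finset.sum_eq_single x] <;> simp +contextual
      have h2 : ∑ a, star (w a) * (star (w x) * w a) = star (w x) := by
        rw [Finset.sum_congr rfl (fun a _ => by ring : ∀ a ∈ Finset.univ,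
          star (w a) * (star (w x) * w a) = star (w x) * (star (w a) * w a)),
          ← Finset.mul_sum, hw, mul_one]
      rw [h1, h2, sub_self]
    have := key1 _ hu b p.1 p.2
    simp only [mul_sub] at this
    rw [Finset.sum_sub_distrib] at this
    have h1 : ∑ x', Ω (p.1, p.2) (x', b) * (if x' = x then (1:ℂ) else 0) = Ω p (x, b) := by
      rw [Finset.sum_eq_single x] <;> simp +contextual
    have h2 : ∑ x', Ω (p.1, p.2) (x', b) * (star (w x) * w x') = star (w x) * h p b := by
      rw [hh]
      simp only []
      rw [Finset.mul_sum]
      exact Finset.sum_congr rfl fun x' _ => by ring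
    rw [h1, h2] at this
    exact sub_eq_zero.mp this
  -- Step 3
  refine ⟨fun b c => ∑ x', star (w x') * h (x', b) c, fun x b y c => ?_⟩
  have hsh : star (h (y, c) b) = star (w y) * ∑ x', star (w x') * h (x', b) c := by
    rw [hh]
    simp only []
    rw [star_sum, Finset.mul_sum]
    refine Finset.sum_congr rfl fun x' _ => ?_
    rw [StarMul.star_mul, ← herm (x', b) (y, c), key2 (x', b) y c]
    ring
  calc Ω (x, b) (y, c) = star (Ω (y, c) (x, b)) := herm _ _
    _ = star (star (w x) * h (y, c) b) := by rw [key2]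
    _ = w x * star (h (y, c) b) := by rw [StarMul.star_mul, star_star, mul_comm]
    _ = w x * star (w y) * (∑ x', star (w x') * h (x', b) c) := by rw [hsh]; ring

end PureMarginal

section Aux

variable {d e o : ℕ} (U : Matrix (Fin d × Fin e × Fin o) (Fin d × Fin e × Fin o) ℂ)
  (χ : Matrix (Fin e × Fin o) (Fin e × Fin o) ℂ)

/-- The elementary building block `∑_{k k'} U_{p,(i,k)} χ_{k k'} conj U_{q,(i',k')}`. -/
def inner4 (i i' : Fin d) (p q : Fin d × Fin e × Fin o) : ℂ :=
  ∑ k : Fin e × Fin o, ∑ k' : Fin e × Fin o, U p (i, k) * χ k k' * star (U q (i', k'))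

lemma sum3_rot {A B C : Type*} [Fintype A] [Fintype B] [Fintype C] (g : A → B → C → ℂ) :
    ∑ a, ∑ b, ∑ c, g a b c = ∑ c, ∑ a, ∑ b, g a b c := by
  rw [show (∑ a, ∑ b, ∑ c, g a b c) = ∑ a, ∑ c, ∑ b, g a b c from
    Finset.sum_congr rfl fun a _ => Finset.sum_comm, Finset.sum_comm]

lemma sum4_perm {A B : Type*} [Fintype A] [Fintype B] (g : A → A → B → B → ℂ) :
    ∑ i : A, ∑ i' : A, ∑ k : B, ∑ k' : B, g i i' k k'
      = ∑ i' : A, ∑ k' : B, ∑ i : A, ∑ k : B, g i i' k k' := by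
  rw [Finset.sum_comm]
  exact Finset.sum_congr rfl fun i' _ => sum3_rot _

lemma sum4_swap {A B C D : Type*} [Fintype A] [Fintype B] [Fintype C] [Fintype D]
    (g : A → B → C → D → ℂ) :
    ∑ a, ∑ b, ∑ c, ∑ x, g a b c x = ∑ c, ∑ x, ∑ a, ∑ b, g a b c x := by
  rw [show (∑ a, ∑ b, ∑ c, ∑ x, g a b c x) = ∑ a, ∑ c, ∑ b, ∑ x, g a b c x from
    Finset.sum_congr rfl fun a _ => Finset.sum_comm]
  rw [Finset.sum_comm]
  refine Finset.sum_congr rfl fun c _ => ?_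
  rw [show (∑ a, ∑ b, ∑ x, g a b c x) = ∑ a, ∑ x, ∑ b, g a b c x from
    Finset.sum_congr rfl fun a _ => Finset.sum_comm]
  rw [Finset.sum_comm]

lemma conj_entry (M : Mat d) (p q : Fin d × Fin e × Fin o) :
    (U * (M ⊗ₖ χ) * Uᴴ) p q = ∑ i, ∑ i', M i i' * inner4 U χ i i' p q := by
  have hUMχ : ∀ j : Fin d × Fin e × Fin o, (U * (M ⊗ₖ χ)) p j
      = ∑ i, ∑ k, U p (i, k) * (M i j.1 * χ k j.2) := by
    intro j
    rw [Matrix.mul_apply, Fintype.sum_prod_type]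
    exact Finset.sum_congr rfl fun i _ => Finset.sum_congr rfl fun k _ => by
      rw [kroneckerMap_apply]
  calc (U * (M ⊗ₖ χ) * Uᴴ) p q = ∑ j, (U * (M ⊗ₖ χ)) p j * star (U q j) := by
        rw [Matrix.mul_apply]
        exact Finset.sum_congr rfl fun j _ => by rw [Matrix.conjTranspose_apply]
    _ = ∑ i', ∑ k', (∑ i, ∑ k, U p (i, k) * (M i i' * χ k k')) * star (U q (i', k')) := by
        rw [Fintype.sum_prod_type]
        exact Finset.sum_congr rfl fun i' _ => Finset.sum_congr rfl fun k' _ => by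
          rw [hUMχ (i', k')]
    _ = ∑ i', ∑ k', ∑ i, ∑ k,
          M i i' * (U p (i, k) * χ k k' * star (U q (i', k'))) := by
        refine Finset.sum_congr rfl fun i' _ => Finset.sum_congr rfl fun k' _ => ?_
        rw [Finset.sum_mul]
        refine Finset.sum_congr rfl fun i _ => ?_
        rw [Finset.sum_mul]
        exact Finset.sum_congr rfl fun k _ => by ring
    _ = ∑ i, ∑ i', ∑ k, ∑ k',
          M i i' * (U p (i, k) * χ k k' * star (U q (i', k'))) :=
        (sum4_perm _).symm
    _ = ∑ i, ∑ i', M i i' * inner4 U χ i i' p q := by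
        simp only [inner4, Finset.mul_sum]

/-- The Choi-type global state `(1 ⊗ U)(Φ⁺ ⊗ χ)(1 ⊗ U)ᴴ`, grouped as `(A × S) × (E × O)`. -/
def omegaM : Matrix ((Fin d × Fin d) × (Fin e × Fin o)) ((Fin d × Fin d) × (Fin e × Fin o)) ℂ :=
  Matrix.of fun x y =>
    ((d : ℂ))⁻¹ * inner4 U χ x.1.1 y.1.1 (x.1.2, x.2) (y.1.2, y.2)

lemma omegaM_posSemidef (hχ : χ.PosSemidef) : (omegaM U χ).PosSemidef := by
  obtain ⟨C, hC⟩ := psd_eq_conjTranspose_mul_self_aux hχ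
  set B : Matrix (Fin e × Fin o) ((Fin d × Fin d) × (Fin e × Fin o)) ℂ :=
    Matrix.of fun k x =>
      (((Real.sqrt d : ℝ) : ℂ))⁻¹ * ∑ k0, C k k0 * star (U (x.1.2, x.2) (x.1.1, k0)) with hB
  have hc : star (((Real.sqrt d : ℝ) : ℂ))⁻¹ = (((Real.sqrt d : ℝ) : ℂ))⁻¹ := by
    rw [star_inv₀, RCLike.star_def, Complex.conj_ofReal]
  have hdd : (((Real.sqrt d : ℝ) : ℂ))⁻¹ * (((Real.sqrt d : ℝ) : ℂ))⁻¹ = ((d : ℂ))⁻¹ := by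
    rw [← mul_inv]
    congr 1
    rw [← Complex.ofReal_mul, Real.mul_self_sqrt (Nat.cast_nonneg d)]
    push_cast
    rfl
  have hχE : ∀ k0 k1, χ k0 k1 = ∑ k, star (C k k0) * C k k1 := by
    intro k0 k1
    rw [hC, Matrix.mul_apply]
    exact Finset.sum_congr rfl fun k _ => by rw [Matrix.conjTranspose_apply]
  have hstar : ∀ (k : Fin e × Fin o) (x' : (Fin d × Fin d) × (Fin e × Fin o)),
      star (B k x') = (((Real.sqrt d : ℝ) : ℂ))⁻¹ *
        ∑ k0, star (C k k0) * U (x'.1.2, x'.2) (x'.1.1, k0) := by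
    intro k x'
    rw [hB]
    simp only [Matrix.of_apply]
    rw [star_mul', hc]
    congr 1
    rw [star_sum]
    exact Finset.sum_congr rfl fun k0 _ => by rw [star_mul', star_star, mul_comm]
  have hBB : omegaM U χ = Bᴴ * B := by
    ext x y
    rw [Matrix.mul_apply]
    refine Eq.symm ?_
    calc ∑ k, Bᴴ x k * B k y
        = ∑ k, star (B k x) * B k y :=
          Finset.sum_congr rfl fun k _ => by rw [Matrix.conjTranspose_apply]
      _ = ∑ k, ((d:ℂ))⁻¹ *
            ((∑ k0, star (C k k0) * U (x.1.2, x.2) (x.1.1, k0)) *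
             (∑ k1, C k k1 * star (U (y.1.2, y.2) (y.1.1, k1)))) := by
          refine Finset.sum_congr rfl fun k _ => ?_
          rw [hstar k x, hB]
          simp only [Matrix.of_apply]
          rw [← hdd]
          ring
      _ = ((d:ℂ))⁻¹ * ∑ k, ∑ k0, ∑ k1,
            (star (C k k0) * U (x.1.2, x.2) (x.1.1, k0)) *
            (C k k1 * star (U (y.1.2, y.2) (y.1.1, k1))) := by
          rw [← Finset.mul_sum]
          congr 1
          refine Finset.sum_congr rfl fun k _ => ?_
          rw [Finset.sum_mul_sum]
      _ = ((d:ℂ))⁻¹ * ∑ k0, ∑ k1, ∑ k,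
            (star (C k k0) * U (x.1.2, x.2) (x.1.1, k0)) *
            (C k k1 * star (U (y.1.2, y.2) (y.1.1, k1))) := by
          rw [sum3_rot (fun k0 k1 k => (star (C k k0) * U (x.1.2, x.2) (x.1.1, k0)) *
            (C k k1 * star (U (y.1.2, y.2) (y.1.1, k1))))]
      _ = ((d:ℂ))⁻¹ * inner4 U χ x.1.1 y.1.1 (x.1.2, x.2) (y.1.2, y.2) := by
          congr 1
          rw [inner4]
          refine Finset.sum_congr rfl fun k0 _ => Finset.sum_congr rfl fun k1 _ => ?_
          rw [hχE k0 k1, Finset.mul_sum, Finset.sum_mul]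
          refine Finset.sum_congr rfl fun k _ => by ring
      _ = omegaM U χ x y := rfl
  rw [hBB]
  exact posSemidef_conjTranspose_mul_self _

lemma sum_inner4_diag (hUU : Uᴴ * U = 1) (i : Fin d) :
    ∑ p : Fin d × Fin e × Fin o, inner4 U χ i i p p = χ.trace := by
  calc ∑ p : Fin d × Fin e × Fin o, inner4 U χ i i p p
      = ∑ k, ∑ k', ∑ p : Fin d × Fin e × Fin o,
          U p (i, k) * χ k k' * star (U p (i, k')) :=
        (sum3_rot fun k k' p => U p (i, k) * χ k k' * star (U p (i, k'))).symm
    _ = ∑ k, ∑ k', χ k k' * (Uᴴ * U) (i, k') (i, k) := by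
        refine Finset.sum_congr rfl fun k _ => Finset.sum_congr rfl fun k' _ => ?_
        rw [Matrix.mul_apply, Finset.mul_sum]
        refine Finset.sum_congr rfl fun p _ => ?_
        rw [Matrix.conjTranspose_apply]
        ring
    _ = ∑ k, χ k k := by
        rw [hUU]
        refine Finset.sum_congr rfl fun k _ => ?_
        rw [Finset.sum_eq_single k]
        · rw [Matrix.one_apply_eq, mul_one]
        · intro k' _ hk'
          have : ((i, k') : Fin d × Fin e × Fin o) ≠ (i, k) := by
            simp [hk']
          rw [Matrix.one_apply_ne this, mul_zero]
        · intro h; exact absurd (Finset.mem_univ _) h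
    _ = χ.trace := rfl

lemma trace_omegaM (hUU : Uᴴ * U = 1) (hχt : χ.trace = 1) (hd : d ≠ 0) :
    (omegaM U χ).trace = 1 := by
  have hdc : (d : ℂ) ≠ 0 := Nat.cast_ne_zero.mpr hd
  calc (omegaM U χ).trace
      = ∑ a : Fin d, ∑ s : Fin d, ∑ m : Fin e × Fin o,
          ((d:ℂ))⁻¹ * inner4 U χ a a (s, m) (s, m) := by
        rw [show (omegaM U χ).trace
            = ∑ x : (Fin d × Fin d) × (Fin e × Fin o), omegaM U χ x x from rfl,
          Fintype.sum_prod_type, Fintype.sum_prod_type]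
        rfl
    _ = ((d:ℂ))⁻¹ * ∑ a : Fin d, ∑ p : Fin d × Fin e × Fin o, inner4 U χ a a p p := by
        refine Eq.symm ?_
        rw [Finset.mul_sum]
        refine Finset.sum_congr rfl fun a _ => ?_
        rw [Finset.mul_sum, Fintype.sum_prod_type]
    _ = ((d:ℂ))⁻¹ * ∑ _a : Fin d, (1:ℂ) := by
        rw [Finset.sum_congr rfl fun a _ => (sum_inner4_diag U χ hUU a).trans hχt]
    _ = 1 := by
        simp only [Finset.sum_const, Finset.card_univ, Fintype.card_fin, nsmul_eq_mul, mul_one]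
        exact inv_mul_cancel₀ hdc

lemma phiPlus_apply' (a j a' l : Fin d) :
    phiPlus d (a, j) (a', l) = if a = j ∧ a' = l then ((d:ℂ))⁻¹ else 0 := by
  have hdd : ((Real.sqrt d : ℝ) : ℂ)⁻¹ * ((Real.sqrt d : ℝ) : ℂ)⁻¹ = ((d:ℂ))⁻¹ := by
    rw [← mul_inv, ← Complex.ofReal_mul,
      Real.mul_self_sqrt (Nat.cast_nonneg d)]
    push_cast
    rfl
  simp only [phiPlus, proj, phiPlusVec, Matrix.of_apply]
  by_cases h1 : a = j <;> by_cases h2 : a' = l <;> simp [h1, h2, hdd]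

lemma tau_eq :
    idTensor (fun ρ : Mat d => trSnd (U * (ρ ⊗ₖ χ) * Uᴴ)) (phiPlus d) = trSnd (omegaM U χ) := by
  ext x y
  obtain ⟨a, s⟩ := x
  obtain ⟨a', s'⟩ := y
  have hcol : ∀ (f : Fin d → Fin d → ℂ),
      (∑ i, ∑ i', (if a = i ∧ a' = i' then ((d:ℂ))⁻¹ else 0) * f i i')
        = ((d:ℂ))⁻¹ * f a a' := by
    intro f
    rw [Finset.sum_eq_single a]
    · rw [Finset.sum_eq_single a']
      · simp
      · intro b _ hb
        have hcond : ¬(a = a ∧ a' = b) := fun h => hb h.2.symm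
        rw [if_neg hcond, zero_mul]
      · intro h; exact absurd (Finset.mem_univ _) h
    · intro b _ hb
      refine Finset.sum_eq_zero fun i' _ => ?_
      have hcond : ¬(a = b ∧ a' = i') := fun h => hb h.1.symm
      rw [if_neg hcond, zero_mul]
    · intro h; exact absurd (Finset.mem_univ _) h
  show trSnd (U * ((Matrix.of fun j l => phiPlus d (a, j) (a', l)) ⊗ₖ χ) * Uᴴ) s s'
      = trSnd (omegaM U χ) (a, s) (a', s')
  calc trSnd (U * ((Matrix.of fun j l => phiPlus d (a, j) (a', l)) ⊗ₖ χ) * Uᴴ) s s'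
      = ∑ m : Fin e × Fin o,
          (U * ((Matrix.of fun j l => phiPlus d (a, j) (a', l)) ⊗ₖ χ) * Uᴴ) (s, m) (s', m) := rfl
    _ = ∑ m : Fin e × Fin o, ∑ i, ∑ i',
          (if a = i ∧ a' = i' then ((d:ℂ))⁻¹ else 0) * inner4 U χ i i' (s, m) (s', m) := by
        refine Finset.sum_congr rfl fun m _ => ?_
        rw [conj_entry]
        exact Finset.sum_congr rfl fun i _ => Finset.sum_congr rfl fun i' _ => by
          rw [Matrix.of_apply, phiPlus_apply']
    _ = ∑ m : Fin e × Fin o, ((d:ℂ))⁻¹ * inner4 U χ a a' (s, m) (s', m) :=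
        Finset.sum_congr rfl fun m _ => hcol _
    _ = trSnd (omegaM U χ) (a, s) (a', s') := rfl

lemma trace_trSE' {X : Matrix (Fin d × Fin e × Fin o) (Fin d × Fin e × Fin o) ℂ} :
    (trSE X).trace = X.trace := by
  calc (trSE X).trace = ∑ j : Fin o, ∑ i : Fin d, ∑ k : Fin e, X (i, k, j) (i, k, j) := rfl
    _ = ∑ i : Fin d, ∑ k : Fin e, ∑ j : Fin o, X (i, k, j) (i, k, j) := by
        rw [sum3_rot fun i k j => X (i, k, j) (i, k, j)]
    _ = X.trace := by
        rw [show X.trace = ∑ p : Fin d × Fin e × Fin o, X p p from rfl]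
        simp only [Fintype.sum_prod_type]

lemma sum_factor {I K : Type*} [Fintype I] [Fintype K] (r dd : ℂ) (f : I → ℂ) (g : K → ℂ) :
    ∑ i, ∑ k, r * (dd * (f i * g k)) = dd * (r * ∑ i, f i) * ∑ k, g k := by
  simp only [Finset.mul_sum, Finset.sum_mul]
  rw [Finset.sum_comm]
  exact Finset.sum_congr rfl fun k _ => Finset.sum_congr rfl fun i _ => by ring

end Aux

/-- Every measurement has nonzero back-action: if the result channel of the procedure
`ρ ↦ U(ρ ⊗ χ)U†` is non-constant on density matrices, then the mutual information retained
between the ancilla and the system is strictly below `2 log d`. -/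
theorem stmt_7 (d e o : ℕ)
    (U : Matrix (Fin d × Fin e × Fin o) (Fin d × Fin e × Fin o) ℂ)
    (hU : U ∈ Matrix.unitaryGroup (Fin d × Fin e × Fin o) ℂ)
    (χ : Matrix (Fin e × Fin o) (Fin e × Fin o) ℂ) (hχ : IsDensity χ)
    (R : Mat d → Mat o) (hR : R = fun ρ => trSE (U * (ρ ⊗ₖ χ) * Uᴴ))
    (D : Mat d → Mat d) (hD : D = fun ρ => trSnd (U * (ρ ⊗ₖ χ) * Uᴴ))
    (hmeas : ∃ ρ σ : Mat d, IsDensity ρ ∧ IsDensity σ ∧ R ρ ≠ R σ) :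
    mutualInfo (idTensor D (phiPlus d)) < 2 * Real.log d := by
  obtain ⟨ρ, σ, hρ, hσ, hRne⟩ := hmeas
  rcases Nat.eq_zero_or_pos d with hd0 | hdpos
  · subst hd0
    exact absurd (congrArg R (Subsingleton.elim ρ σ)) hRne
  have hd : d ≠ 0 := Nat.pos_iff_ne_zero.mp hdpos
  have hdc : (d : ℂ) ≠ 0 := Nat.cast_ne_zero.mpr hd
  have hUU : Uᴴ * U = 1 := by
    have := Matrix.mem_unitaryGroup_iff'.mp hU
    rwa [Matrix.star_eq_conjTranspose] at this
  have hΩpsd : (omegaM U χ).PosSemidef := omegaM_posSemidef U χ hχ.1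
  have hτeq : idTensor D (phiPlus d) = trSnd (omegaM U χ) := by
    rw [hD]; exact tau_eq U χ
  have hτpsd : (idTensor D (phiPlus d)).PosSemidef := by
    rw [hτeq]; exact posSemidef_trSnd hΩpsd
  have hΩtr : (omegaM U χ).trace = 1 := trace_omegaM U χ hUU hχ.2 hd
  have hτtr : (idTensor D (phiPlus d)).trace = 1 := by
    rw [hτeq, trace_trSnd, hΩtr]
  by_contra hcon
  push_neg at hcon
  have hb1 : entropy (trSnd (idTensor D (phiPlus d))) ≤ Real.log d := by
    have := entropy_le_log (posSemidef_trSnd hτpsd) (by rw [trace_trSnd, hτtr])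
    simpa using this
  have hb2 : entropy (trFst (idTensor D (phiPlus d))) ≤ Real.log d := by
    have := entropy_le_log (posSemidef_trFst hτpsd) (by rw [trace_trFst, hτtr])
    simpa using this
  have hSτ : entropy (idTensor D (phiPlus d)) ≤ 0 := by
    have hmi : mutualInfo (idTensor D (phiPlus d))
        = entropy (trSnd (idTensor D (phiPlus d))) + entropy (trFst (idTensor D (phiPlus d)))
          - entropy (idTensor D (phiPlus d)) := rfl
    rw [hmi] at hcon
    linarith
  obtain ⟨w, hw1, hwf⟩ := pure_of_entropy_nonpos hτpsd hτtr hSτ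
  have hm : ∀ x y : Fin d × Fin d, (∑ b, omegaM U χ (x, b) (y, b)) = w x * star (w y) := by
    intro x y
    calc ∑ b, omegaM U χ (x, b) (y, b) = trSnd (omegaM U χ) x y := rfl
      _ = (idTensor D (phiPlus d)) x y := by rw [hτeq]
      _ = w x * star (w y) := hwf x y
  obtain ⟨ξ, hfac⟩ := pure_marginal_product hΩpsd hw1 hm
  -- the result channel is constant on density matrices: contradiction
  have hinv : ∀ (a a' s s' : Fin d) (m m' : Fin e × Fin o),
      inner4 U χ a a' (s, m) (s', m') = (d:ℂ) * omegaM U χ ((a, s), m) ((a', s'), m') := by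
    intro a a' s s' m m'
    show inner4 U χ a a' (s, m) (s', m')
        = (d:ℂ) * (((d:ℂ))⁻¹ * inner4 U χ a a' (s, m) (s', m'))
    rw [← mul_assoc, mul_inv_cancel₀ hdc, one_mul]
  have hRt : ∀ (ρ' : Mat d) (j l : Fin o), R ρ' j l =
      ((d:ℂ) * ∑ a, ∑ a', ρ' a a' * ∑ i, w (a, i) * star (w (a', i)))
        * ∑ k : Fin e, ξ (k, j) (k, l) := by
    intro ρ' j l
    rw [hR]
    calc trSE (U * (ρ' ⊗ₖ χ) * Uᴴ) j l
        = ∑ i : Fin d, ∑ k : Fin e, (U * (ρ' ⊗ₖ χ) * Uᴴ) (i, (k, j)) (i, (k, l)) := rfl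
      _ = ∑ i : Fin d, ∑ k : Fin e, ∑ a, ∑ a',
            ρ' a a' * inner4 U χ a a' (i, (k, j)) (i, (k, l)) := by
          exact Finset.sum_congr rfl fun i _ => Finset.sum_congr rfl fun k _ => by
            rw [conj_entry]
      _ = ∑ i : Fin d, ∑ k : Fin e, ∑ a, ∑ a',
            ρ' a a' * ((d:ℂ) * (w (a, i) * star (w (a', i)) * ξ (k, j) (k, l))) := by
          refine Finset.sum_congr rfl fun i _ => Finset.sum_congr rfl fun k _ =>
            Finset.sum_congr rfl fun a _ => Finset.sum_congr rfl fun a' _ => ?_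
          rw [hinv, hfac]
      _ = ∑ a, ∑ a', ∑ i : Fin d, ∑ k : Fin e,
            ρ' a a' * ((d:ℂ) * (w (a, i) * star (w (a', i)) * ξ (k, j) (k, l))) :=
          sum4_swap _
      _ = ∑ a, ∑ a', (d:ℂ) * (ρ' a a' * ∑ i, w (a, i) * star (w (a', i)))
            * ∑ k : Fin e, ξ (k, j) (k, l) := by
          refine Finset.sum_congr rfl fun a _ => Finset.sum_congr rfl fun a' _ => ?_
          exact sum_factor (ρ' a a') ((d:ℂ)) (fun i => w (a, i) * star (w (a', i)))
            (fun k => ξ (k, j) (k, l))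
      _ = ((d:ℂ) * ∑ a, ∑ a', ρ' a a' * ∑ i, w (a, i) * star (w (a', i)))
            * ∑ k : Fin e, ξ (k, j) (k, l) := by
          simp only [Finset.mul_sum, Finset.sum_mul]
          rw [sum3_rot fun a a' k => ∑ i, (d:ℂ) * (ρ' a a' * (w (a, i) * star (w (a', i))))
            * ξ (k, j) (k, l)]
  set t : Mat d → ℂ :=
    fun ρ' => (d:ℂ) * ∑ a, ∑ a', ρ' a a' * ∑ i, w (a, i) * star (w (a', i)) with htdef
  set Tη : ℂ := ∑ j : Fin o, ∑ k : Fin e, ξ (k, j) (k, j) with hTη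
  have htr : ∀ ρ' : Mat d, IsDensity ρ' → t ρ' * Tη = 1 := by
    intro ρ' hρ'
    have h1 : (R ρ').trace = 1 := by
      rw [hR]
      show (trSE (U * (ρ' ⊗ₖ χ) * Uᴴ)).trace = 1
      rw [trace_trSE', Matrix.trace_mul_cycle, hUU, Matrix.one_mul, Matrix.trace_kronecker,
        hρ'.2, hχ.2, mul_one]
    have h2 : (R ρ').trace = t ρ' * Tη := by
      rw [show (R ρ').trace = ∑ j, R ρ' j j from rfl, hTη]
      rw [Finset.sum_congr rfl fun j _ => hRt ρ' j j]
      exact (Finset.mul_sum _ _ _).symm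
    rw [← h2, h1]
  have hTη0 : Tη ≠ 0 := by
    intro h0
    have := htr ρ hρ
    rw [h0, mul_zero] at this
    exact one_ne_zero this.symm
  have hts : t ρ = t σ := by
    have e1 := htr ρ hρ
    have e2 := htr σ hσ
    exact mul_right_cancel₀ hTη0 (e1.trans e2.symm)
  apply hRne
  ext j l
  rw [hRt ρ j l, hRt σ j l]
  rw [show ((d:ℂ) * ∑ a, ∑ a', ρ a a' * ∑ i, w (a, i) * star (w (a', i))) = t ρ from rfl,
    show ((d:ℂ) * ∑ a, ∑ a', σ a a' * ∑ i, w (a, i) * star (w (a', i))) = t σ from rfl, hts]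

end
end

section
/- Consider the dephased swap measurement: the system S and observer O are each ℂ^d, the environment E is ℂ^d initialized in |0⟩, the observer is initialized in a density matrix τ, and the total unitary is U = V_{OE} · SWAP_{SO}, where V_{OE} is a copying unitary with V(|k⟩_O ⊗ |0⟩_E) = |k⟩_O ⊗ |k⟩_E for every basis vector |k⟩. Then for every density matrix ρ on ℂ^d, the joint system-observer state after the measurement is a product of the constant disturbed state and the dephased result: tr_E[U (ρ ⊗ |0⟩⟨0|_E ⊗ τ) U†] = τ_S ⊗ Δ(ρ)_O, where Δ(ρ) = ∑_k ⟨k|ρ|k⟩ |k⟩⟨k|. In particular, unlike a von Neumann measurement, there is no correlation between the post-measurement system and the observer's memory. -/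
open Matrix Kronecker
open scoped ComplexOrder

noncomputable section

/-- The basis vector `|0⟩` of `ℂ^d`. -/
def e0vec (d : ℕ) : Fin d → ℂ := fun i => if (i : ℕ) = 0 then 1 else 0

/-- The SWAP between the first (system) and third (observer) factors of `S ⊗ E ⊗ O`. -/
def swapSO (d : ℕ) : Matrix (Fin d × Fin d × Fin d) (Fin d × Fin d × Fin d) ℂ :=
  Matrix.of fun p q => if p.1 = q.2.2 ∧ p.2.1 = q.2.1 ∧ p.2.2 = q.1 then 1 else 0

/-- Partial trace over the middle (environment) factor of `S ⊗ E ⊗ O`. -/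
def trMid {a b c : Type*} [Fintype b]
    (X : Matrix (a × b × c) (a × b × c) ℂ) : Matrix (a × c) (a × c) ℂ :=
  Matrix.of fun p q => ∑ j : b, X (p.1, j, p.2) (q.1, j, q.2)

/-- The dephasing channel in the standard basis. -/
def deph {d : ℕ} (ρ : Mat d) : Mat d := Matrix.diagonal fun i => ρ i i

lemma star_ite01 (c : Prop) [Decidable c] :
    star (if c then (1:ℂ) else 0) = if c then (1:ℂ) else 0 := by
  split <;> simp

lemma kron_conjT {l m n p : Type*} (A : Matrix l m ℂ) (B : Matrix n p ℂ) :
    (A ⊗ₖ B)ᴴ = Aᴴ ⊗ₖ Bᴴ := by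
  ext x y
  simp [conjTranspose_apply, kroneckerMap_apply, star_mul']

lemma swap_conj (d : ℕ) (A B C : Mat d) :
    swapSO d * (A ⊗ₖ (B ⊗ₖ C)) * (swapSO d)ᴴ = C ⊗ₖ (B ⊗ₖ A) := by
  have hS : ∀ p r : Fin d × Fin d × Fin d,
      swapSO d p r = if r = (p.2.2, p.2.1, p.1) then (1:ℂ) else 0 := by
    intro p r
    simp only [swapSO, of_apply, Prod.ext_iff]
    exact if_congr ⟨fun h => ⟨h.2.2.symm, h.2.1.symm, h.1.symm⟩,
      fun h => ⟨h.2.2.symm, h.2.1.symm, h.1.symm⟩⟩ rfl rfl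
  ext p q
  simp only [Matrix.mul_apply, conjTranspose_apply, hS, kroneckerMap_apply, star_ite01,
    ite_mul, one_mul, zero_mul, mul_ite, mul_one, mul_zero]
  simp only [Finset.sum_ite_eq', Finset.mem_univ, if_true]
  ring

/-- The dephased swap measurement `U = V_{OE} · SWAP_{SO}` leaves the system and observer in
the uncorrelated product `τ ⊗ Δ(ρ)` of the constant disturbed state and the dephased result. -/
theorem stmt_14 (d : ℕ) (hd : 0 < d)
    (τ : Mat d) (hτ : IsDensity τ)
    (V : Matrix (Fin d × Fin d) (Fin d × Fin d) ℂ)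
    (hV : V ∈ Matrix.unitaryGroup (Fin d × Fin d) ℂ)
    (hVcopy : ∀ k : Fin d,
      V *ᵥ (fun p => e0vec d p.1 * (if p.2 = k then 1 else 0)) =
        fun p => if p.1 = k ∧ p.2 = k then 1 else 0)
    (U : Matrix (Fin d × Fin d × Fin d) (Fin d × Fin d × Fin d) ℂ)
    (hU : U = ((1 : Mat d) ⊗ₖ V) * swapSO d)
    (ρ : Mat d) (hρ : IsDensity ρ) :
    trMid (U * (ρ ⊗ₖ (proj (e0vec d) ⊗ₖ τ)) * Uᴴ) = τ ⊗ₖ deph ρ := by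
  set i0 : Fin d := ⟨0, hd⟩ with hi0
  have he0 : e0vec d = fun i => if i = i0 then (1:ℂ) else 0 := by
    funext i; simp [e0vec, Fin.ext_iff, hi0]
  have hVkey : ∀ (x : Fin d × Fin d) (k : Fin d),
      V x (i0, k) = if x = (k, k) then 1 else 0 := by
    intro x k
    have h := congrFun (hVcopy k) x
    simp only [Matrix.mulVec, dotProduct, he0] at h
    have hrw : ∀ y : Fin d × Fin d,
        V x y * ((if y.1 = i0 then (1:ℂ) else 0) * (if y.2 = k then 1 else 0)) =
        if y = (i0, k) then V x y else 0 := by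
      intro y
      by_cases h1 : y = (i0, k)
      · subst h1; simp
      · rw [if_neg h1]
        rcases y with ⟨y1, y2⟩
        by_cases h2 : y1 = i0
        · subst h2
          have : ¬ y2 = k := fun hk => h1 (by rw [hk])
          simp [this]
        · simp [h2]
    rw [Finset.sum_congr rfl (fun y _ => hrw y), Finset.sum_ite_eq'] at h
    simp only [Finset.mem_univ, if_true] at h
    rw [h]
    simp [Prod.ext_iff]
  have hmid : V * (proj (e0vec d) ⊗ₖ ρ) * Vᴴ =
      Matrix.of (fun x y : Fin d × Fin d =>
        if x.1 = x.2 ∧ y.1 = y.2 then ρ x.1 y.1 else 0) := by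
    have step1 : ∀ x s : Fin d × Fin d,
        (V * (proj (e0vec d) ⊗ₖ ρ)) x s =
        (if s.1 = i0 then (1:ℂ) else 0) *
          (if x.1 = x.2 then ρ x.1 s.2 else 0) := by
      rintro ⟨x1, x2⟩ ⟨s1, s2⟩
      rw [Matrix.mul_apply]
      have hrw : ∀ r : Fin d × Fin d,
          V (x1, x2) r * ((proj (e0vec d) ⊗ₖ ρ) r (s1, s2)) =
          if r.1 = i0 then
            (if s1 = i0 then (1:ℂ) else 0) * (V (x1, x2) (i0, r.2) * ρ r.2 s2)
          else 0 := by
        rintro ⟨r1, r2⟩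
        by_cases h1 : r1 = i0
        · subst h1
          simp only [proj, kroneckerMap_apply, of_apply, he0, star_ite01, if_pos rfl]
          by_cases h2 : s1 = i0 <;> simp [h2] <;> ring
        · simp [proj, kroneckerMap_apply, he0, h1]
      rw [Finset.sum_congr rfl (fun r _ => hrw r), Fintype.sum_prod_type_right]
      simp only [Finset.sum_ite_eq', Finset.mem_univ, if_true]
      have hrw2 : ∀ r2 : Fin d,
          (if s1 = i0 then (1:ℂ) else 0) * (V (x1, x2) (i0, r2) * ρ r2 s2) =
          if r2 = x1 then (if s1 = i0 then (1:ℂ) else 0) *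
            (if x1 = x2 then ρ r2 s2 else 0) else 0 := by
        intro r2
        rw [hVkey]
        by_cases hr : r2 = x1
        · subst hr
          by_cases hxx : r2 = x2
          · subst hxx; simp
          · have : ¬ ((r2, x2) = (r2, r2)) := by
              simp [Prod.ext_iff]; exact fun h => hxx h.symm
            simp [this, hxx]
        · have : ¬ ((x1, x2) = (r2, r2)) := by
            simp [Prod.ext_iff]; intro h _; exact hr h.symm
          simp [this, hr]
      rw [Finset.sum_congr rfl (fun r2 _ => hrw2 r2), Finset.sum_ite_eq']
      simp
    ext x y
    rcases x with ⟨x1, x2⟩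
    rcases y with ⟨y1, y2⟩
    rw [Matrix.mul_apply]
    have hrw3 : ∀ s : Fin d × Fin d,
        (V * (proj (e0vec d) ⊗ₖ ρ)) (x1, x2) s * (Vᴴ) s (y1, y2) =
        if s.1 = i0 then
          (if x1 = x2 then ρ x1 s.2 else 0) * star (V (y1, y2) (i0, s.2))
        else 0 := by
      rintro ⟨s1, s2⟩
      rw [step1, conjTranspose_apply]
      by_cases h1 : s1 = i0
      · subst h1; simp
      · simp [h1]
    rw [Finset.sum_congr rfl (fun s _ => hrw3 s), Fintype.sum_prod_type_right]
    simp only [Finset.sum_ite_eq', Finset.mem_univ, if_true]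
    have hrw4 : ∀ s2 : Fin d,
        (if x1 = x2 then ρ x1 s2 else 0) * star (V (y1, y2) (i0, s2)) =
        if s2 = y1 then
          (if x1 = x2 then ρ x1 s2 else 0) * (if y1 = y2 then 1 else 0) else 0 := by
      intro s2
      rw [hVkey]
      by_cases hs : s2 = y1
      · subst hs
        by_cases hyy : s2 = y2
        · subst hyy; simp
        · have : ¬ ((s2, y2) = (s2, s2)) := by
            simp [Prod.ext_iff]; exact fun h => hyy h.symm
          simp [this, hyy]
      · have : ¬ ((y1, y2) = (s2, s2)) := by
          simp [Prod.ext_iff]; intro h _; exact hs h.symm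
        simp [this, hs]
    rw [Finset.sum_congr rfl (fun s2 _ => hrw4 s2), Finset.sum_ite_eq']
    simp only [Finset.mem_univ, if_true, of_apply]
    by_cases hxx : x1 = x2 <;> by_cases hyy : y1 = y2 <;> simp [hxx, hyy]
  -- assemble
  subst hU
  rw [Matrix.conjTranspose_mul]
  have h1 : ((1 : Mat d) ⊗ₖ V) * swapSO d * (ρ ⊗ₖ (proj (e0vec d) ⊗ₖ τ)) *
      ((swapSO d)ᴴ * (((1 : Mat d) ⊗ₖ V))ᴴ) =
      ((1 : Mat d) ⊗ₖ V) * (swapSO d * (ρ ⊗ₖ (proj (e0vec d) ⊗ₖ τ)) * (swapSO d)ᴴ) *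
        (((1 : Mat d) ⊗ₖ V))ᴴ := by
    simp only [Matrix.mul_assoc]
  rw [h1, swap_conj d ρ (proj (e0vec d)) τ, kron_conjT, Matrix.conjTranspose_one]
  rw [← Matrix.mul_kronecker_mul, ← Matrix.mul_kronecker_mul, Matrix.one_mul,
    Matrix.mul_one, hmid]
  ext p q
  rcases p with ⟨a, c⟩
  rcases q with ⟨a', c'⟩
  simp only [trMid, of_apply, kroneckerMap_apply]
  rw [← Finset.mul_sum]
  congr 1
  have hrw5 : ∀ j : Fin d,
      (if j = c ∧ j = c' then ρ j j else 0) =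
      if j = c then (if c = c' then ρ j j else 0) else 0 := by
    intro j
    by_cases hj : j = c
    · subst hj; by_cases hc : j = c' <;> simp [hc]
    · simp [hj]
  calc (∑ j : Fin d, Matrix.of (fun x y : Fin d × Fin d =>
          if x.1 = x.2 ∧ y.1 = y.2 then ρ x.1 y.1 else 0) (j, c) (j, c'))
      = ∑ j : Fin d, if j = c then (if c = c' then ρ j j else 0) else 0 := by
        refine Finset.sum_congr rfl fun j _ => ?_
        rw [of_apply]; exact hrw5 j
    _ = deph ρ c c' := by
        rw [Finset.sum_ite_eq']
        simp [deph, Matrix.diagonal_apply]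


end
end

section
/- Let d ≥ 2, let |0⟩, |ψ'⟩ be orthonormal vectors in ℂ^d, and on (ℂ^d)^{⊗3} let H = S_{12} + S_{13} (simultaneous swap coupling of the system to two observers). Write ψ = a|0⟩ + b|ψ'⟩ with a, b ∈ ℂ, |a|² + |b|² = 1. Then for every t ∈ ℝ, e^{−itH}(ψ⊗|0⟩⊗|0⟩) = e^{−2it}( a·|0⟩⊗|0⟩⊗|0⟩ + (b/√3)·e₂ ) − (2b/√6)·e^{it}·e₃, where e₂ = (1/√3)(|ψ'⟩⊗|0⟩⊗|0⟩ + |0⟩⊗|ψ'⟩⊗|0⟩ + |0⟩⊗|0⟩⊗|ψ'⟩) and e₃ = (1/√6)(−2|ψ'⟩⊗|0⟩⊗|0⟩ + |0⟩⊗|ψ'⟩⊗|0⟩ + |0⟩⊗|0⟩⊗|ψ'⟩). -/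
open Matrix Kronecker
open scoped ComplexOrder

noncomputable section

/-- Elementary tensor of three vectors on `(ℂ^d)^{⊗3}`. -/
def tp3 {d : ℕ} (x y z : Fin d → ℂ) : Fin d × Fin d × Fin d → ℂ :=
  fun p => x p.1 * y p.2.1 * z p.2.2

/-- The unitary swapping the first and second tensor factors. -/
def S12 (d : ℕ) : Matrix (Fin d × Fin d × Fin d) (Fin d × Fin d × Fin d) ℂ :=
  Matrix.of fun p q => if p.1 = q.2.1 ∧ p.2.1 = q.1 ∧ p.2.2 = q.2.2 then 1 else 0

/-- The unitary swapping the first and third tensor factors. -/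
def S13 (d : ℕ) : Matrix (Fin d × Fin d × Fin d) (Fin d × Fin d × Fin d) ℂ :=
  Matrix.of fun p q => if p.1 = q.2.2 ∧ p.2.1 = q.2.1 ∧ p.2.2 = q.1 then 1 else 0


attribute [local instance] Matrix.linftyOpNormedRing Matrix.linftyOpNormedAlgebra

lemma exp_eigen_aux {n : Type*} [Fintype n] [DecidableEq n] (M : Matrix n n ℂ) (v : n → ℂ)
    (c : ℂ) (h : M *ᵥ v = c • v) : NormedSpace.exp M *ᵥ v = Complex.exp c • v := by
  have hpow : ∀ k : ℕ, (M ^ k) *ᵥ v = (c ^ k) • v := by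
    intro k
    induction k with
    | zero => simp
    | succ k ih =>
      rw [pow_succ, ← Matrix.mulVec_mulVec, h, Matrix.mulVec_smul, ih, smul_smul, pow_succ]
      ring_nf
  let L : Matrix n n ℂ →ₗ[ℂ] (n → ℂ) :=
    { toFun := fun A => A *ᵥ v
      map_add' := fun A B => Matrix.add_mulVec A B v
      map_smul' := fun r A => Matrix.smul_mulVec r A v }
  let Lc : Matrix n n ℂ →L[ℂ] (n → ℂ) := ⟨L, L.continuous_of_finiteDimensional⟩
  have hs : Summable fun k : ℕ => ((k.factorial : ℂ)⁻¹) • M ^ k :=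
    NormedSpace.expSeries_summable' (𝕂 := ℂ) M
  have key : NormedSpace.exp M *ᵥ v = ∑' k : ℕ, ((k.factorial : ℂ)⁻¹ * c ^ k) • v := by
    rw [NormedSpace.exp_eq_tsum ℂ]
    have hm := Lc.map_tsum hs
    simp only [Lc, L, ContinuousLinearMap.coe_mk', LinearMap.coe_mk, AddHom.coe_mk] at hm
    rw [hm]
    congr 1
    funext k
    rw [Matrix.smul_mulVec, hpow, smul_smul]
  rw [key, Summable.tsum_smul_const]
  · congr 1
    rw [Complex.exp_eq_exp_ℂ, NormedSpace.exp_eq_tsum ℂ]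
    simp [smul_eq_mul]
  · have := NormedSpace.expSeries_summable' (𝕂 := ℂ) c
    simpa [smul_eq_mul] using this

lemma S12_mulVec_aux {d : ℕ} (f : Fin d × Fin d × Fin d → ℂ) :
    S12 d *ᵥ f = fun p => f (p.2.1, p.1, p.2.2) := by
  funext p
  simp [S12, Matrix.mulVec, dotProduct, Fintype.sum_prod_type, ite_and]

lemma S13_mulVec_aux {d : ℕ} (f : Fin d × Fin d × Fin d → ℂ) :
    S13 d *ᵥ f = fun p => f (p.2.2, p.2.1, p.1) := by
  funext p
  simp [S13, Matrix.mulVec, dotProduct, Fintype.sum_prod_type, ite_and]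

lemma S12_tp3_aux {d : ℕ} (x y z : Fin d → ℂ) : S12 d *ᵥ tp3 x y z = tp3 y x z := by
  rw [S12_mulVec_aux]; funext p; simp only [tp3]; ring

lemma S13_tp3_aux {d : ℕ} (x y z : Fin d → ℂ) : S13 d *ᵥ tp3 x y z = tp3 z y x := by
  rw [S13_mulVec_aux]; funext p; simp only [tp3]; ring

/-- Explicit time evolution under the simultaneous-swap Hamiltonian `H = S₁₂ + S₁₃` of the
initial state `(a|0⟩ + b|ψ'⟩) ⊗ |0⟩ ⊗ |0⟩`. -/
theorem stmt_16 (d : ℕ) (hd : 2 ≤ d) (v0 ψ' : Fin d → ℂ)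
    (hv0 : star v0 ⬝ᵥ v0 = 1) (hψ' : star ψ' ⬝ᵥ ψ' = 1) (horth : star v0 ⬝ᵥ ψ' = 0)
    (a b : ℂ) (hab : Complex.normSq a + Complex.normSq b = 1)
    (e₂ e₃ : Fin d × Fin d × Fin d → ℂ)
    (he₂ : e₂ = ((Real.sqrt 3 : ℂ))⁻¹ • (tp3 ψ' v0 v0 + tp3 v0 ψ' v0 + tp3 v0 v0 ψ'))
    (he₃ : e₃ = ((Real.sqrt 6 : ℂ))⁻¹ •
      ((-2 : ℂ) • tp3 ψ' v0 v0 + tp3 v0 ψ' v0 + tp3 v0 v0 ψ'))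
    (t : ℝ) :
    NormedSpace.exp ((-(Complex.I * (t : ℂ))) • (S12 d + S13 d)) *ᵥ
        tp3 (a • v0 + b • ψ') v0 v0 =
      Complex.exp (-(2 * Complex.I * (t : ℂ))) •
          (a • tp3 v0 v0 v0 + (b / (Real.sqrt 3 : ℂ)) • e₂) -
        ((2 * b / (Real.sqrt 6 : ℂ)) * Complex.exp (Complex.I * (t : ℂ))) • e₃ := by
  set s3 : ℂ := ((Real.sqrt 3 : ℝ) : ℂ) with hs3def
  set s6 : ℂ := ((Real.sqrt 6 : ℝ) : ℂ) with hs6def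
  have hsq3 : s3 * s3 = 3 := by
    rw [hs3def, ← Complex.ofReal_mul, Real.mul_self_sqrt (by norm_num)]; norm_num
  have hsq6 : s6 * s6 = 6 := by
    rw [hs6def, ← Complex.ofReal_mul, Real.mul_self_sqrt (by norm_num)]; norm_num
  have h3ne : s3 ≠ 0 := by
    rw [hs3def]; exact_mod_cast Complex.ofReal_ne_zero.mpr (by positivity)
  have h6ne : s6 ≠ 0 := by
    rw [hs6def]; exact_mod_cast Complex.ofReal_ne_zero.mpr (by positivity)
  set A := tp3 ψ' v0 v0 with hA
  set B := tp3 v0 ψ' v0 with hB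
  set C := tp3 v0 v0 ψ' with hC
  set F := tp3 v0 v0 v0 with hF
  set H := S12 d + S13 d with hH
  -- eigenvector relations
  have hHF : H *ᵥ F = (2 : ℂ) • F := by
    rw [hH, Matrix.add_mulVec, hF, S12_tp3_aux, S13_tp3_aux]
    module
  have hHe2 : H *ᵥ e₂ = (2 : ℂ) • e₂ := by
    rw [he₂, hH, Matrix.add_mulVec, Matrix.mulVec_smul, Matrix.mulVec_smul,
      Matrix.mulVec_add, Matrix.mulVec_add, Matrix.mulVec_add, Matrix.mulVec_add,
      hA, hB, hC, S12_tp3_aux, S12_tp3_aux, S12_tp3_aux,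
      S13_tp3_aux, S13_tp3_aux, S13_tp3_aux]
    module
  have hHe3 : H *ᵥ e₃ = (-1 : ℂ) • e₃ := by
    rw [he₃, hH, Matrix.add_mulVec, Matrix.mulVec_smul, Matrix.mulVec_smul,
      Matrix.mulVec_add, Matrix.mulVec_add, Matrix.mulVec_add, Matrix.mulVec_add,
      Matrix.mulVec_smul, Matrix.mulVec_smul,
      hA, hB, hC, S12_tp3_aux, S12_tp3_aux, S12_tp3_aux,
      S13_tp3_aux, S13_tp3_aux, S13_tp3_aux]
    module
  set M := (-(Complex.I * (t : ℂ))) • H with hM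
  have eigM : ∀ (v : _) (c : ℂ), H *ᵥ v = c • v →
      NormedSpace.exp M *ᵥ v = Complex.exp (-(Complex.I * (t : ℂ)) * c) • v := by
    intro v c hv
    apply exp_eigen_aux
    rw [hM, Matrix.smul_mulVec, hv, smul_smul]
  have expF := eigM F 2 hHF
  have expE2 := eigM e₂ 2 hHe2
  have expE3 := eigM e₃ (-1) hHe3
  -- decomposition of the initial vector
  have hdec : tp3 (a • v0 + b • ψ') v0 v0 =
      a • F + ((b / s3) • e₂ + (-(2 * b / s6)) • e₃) := by
    have hinit : tp3 (a • v0 + b • ψ') v0 v0 = a • F + b • A := by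
      funext p; simp only [tp3, hF, hA, Pi.add_apply, Pi.smul_apply, smul_eq_mul]; ring
    have c1 : b / s3 * s3⁻¹ = b / 3 := by
      rw [div_eq_mul_inv, mul_assoc, ← mul_inv, hsq3, ← div_eq_mul_inv]
    have c2 : -(2 * b / s6) * s6⁻¹ = -(b / 3) := by
      have h : 2 * b / s6 * s6⁻¹ = b / 3 := by
        rw [div_eq_mul_inv, mul_assoc, ← mul_inv, hsq6, ← div_eq_mul_inv]
        ring
      rw [neg_mul, h]
    rw [hinit, he₂, he₃, smul_smul, smul_smul, c1, c2]
    module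
  rw [hdec, Matrix.mulVec_add, Matrix.mulVec_add, Matrix.mulVec_smul, Matrix.mulVec_smul,
    Matrix.mulVec_smul, expF, expE2, expE3]
  have harg1 : -(Complex.I * (t : ℂ)) * 2 = -(2 * Complex.I * (t : ℂ)) := by ring
  have harg2 : -(Complex.I * (t : ℂ)) * (-1) = Complex.I * (t : ℂ) := by ring
  rw [harg1, harg2]
  module


end
end

section
/- Let d ≥ 2, fix a unit vector |ψ'⟩ ∈ ℂ^d orthogonal to |0⟩, and on (ℂ^d)^{⊗3} let H = S_{12} + S_{13}. For t ∈ ℝ define the result channel of observer A on initial system state ψ as the reduced density matrix on the second tensor factor of e^{−itH}(ψ⊗|0⟩⊗|0⟩). Then this procedure is a measurement — i.e., there exist unit vectors ψ, φ whose reduced second-factor states differ — if and only if e^{3it} ≠ 1. In particular, when e^{3it} ≠ 1 the reduced second-factor states produced by the initial system states |0⟩ and |ψ'⟩ are different. -/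
open Matrix Kronecker
open scoped ComplexOrder

noncomputable section

/-- The reduced density matrix on the second factor of a tripartite vector state. -/
def redSecond {d : ℕ} (v : Fin d × Fin d × Fin d → ℂ) : Mat d :=
  Matrix.of fun j l => ∑ i : Fin d, ∑ k : Fin d, v (i, j, k) * star (v (i, l, k))


private def mulVecCLM {n : Type*} [Fintype n] [DecidableEq n] (w : n → ℂ) :
    Matrix n n ℂ →ₗ[ℂ] (n → ℂ) where
  toFun A := A *ᵥ w
  map_add' A B := Matrix.add_mulVec A B w
  map_smul' c A := Matrix.smul_mulVec c A w

lemma exp_mulVec_eigen {n : Type*} [Fintype n] [DecidableEq n] (M : Matrix n n ℂ)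
    (w : n → ℂ) (μ : ℂ) (h : M *ᵥ w = μ • w) :
    NormedSpace.exp M *ᵥ w = Complex.exp μ • w := by
  letI : SeminormedRing (Matrix n n ℂ) := Matrix.linftyOpSemiNormedRing
  letI : NormedRing (Matrix n n ℂ) := Matrix.linftyOpNormedRing
  letI : NormedAlgebra ℂ (Matrix n n ℂ) := Matrix.linftyOpNormedAlgebra
  have hpow : ∀ k : ℕ, M ^ k *ᵥ w = μ ^ k • w := by
    intro k
    induction k with
    | zero => simp
    | succ k ih =>
      rw [pow_succ', pow_succ', ← Matrix.mulVec_mulVec, ih, Matrix.mulVec_smul, h,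
        smul_smul, mul_comm]
  set L := mulVecCLM w with hLdef
  have hL : Continuous L := L.continuous_of_finiteDimensional
  have hs : Summable (fun k : ℕ => ((k.factorial : ℂ))⁻¹ • M ^ k) :=
    NormedSpace.expSeries_summable' M
  have key : NormedSpace.exp M *ᵥ w = ∑' k : ℕ, (((k.factorial : ℂ))⁻¹ * μ ^ k) • w := by
    rw [NormedSpace.exp_eq_tsum (𝕂 := ℂ)]
    have h2 : L (∑' k : ℕ, ((k.factorial : ℂ))⁻¹ • M ^ k)
        = ∑' k : ℕ, L (((k.factorial : ℂ))⁻¹ • M ^ k) :=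
      ((hs.hasSum.map L hL).tsum_eq).symm
    refine h2.trans ?_
    congr 1
    funext k
    rw [_root_.map_smul]
    show ((k.factorial : ℂ))⁻¹ • (M ^ k *ᵥ w) = _
    rw [hpow, smul_smul]
  rw [key, Summable.tsum_smul_const, Complex.exp_eq_exp_ℂ, NormedSpace.exp_eq_tsum (𝕂 := ℂ)]
  · simp [smul_eq_mul]
  · simpa [smul_eq_mul] using NormedSpace.expSeries_summable' (𝕂 := ℂ) μ

lemma S12_mulVec {d : ℕ} (v : Fin d × Fin d × Fin d → ℂ) :
    S12 d *ᵥ v = fun p => v (p.2.1, p.1, p.2.2) := by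
  funext p
  simp only [S12, mulVec, dotProduct, of_apply]
  rw [Finset.sum_eq_single ((p.2.1, p.1, p.2.2) : Fin d × Fin d × Fin d)]
  · simp
  · rintro ⟨a, b, c⟩ - hne
    simp only [ite_mul, one_mul, zero_mul, ite_eq_right_iff]
    rintro ⟨rfl, rfl, rfl⟩
    exact absurd rfl hne
  · exact fun h => absurd (Finset.mem_univ _) h

lemma S13_mulVec {d : ℕ} (v : Fin d × Fin d × Fin d → ℂ) :
    S13 d *ᵥ v = fun p => v (p.2.2, p.2.1, p.1) := by
  funext p
  simp only [S13, mulVec, dotProduct, of_apply]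
  rw [Finset.sum_eq_single ((p.2.2, p.2.1, p.1) : Fin d × Fin d × Fin d)]
  · simp
  · rintro ⟨a, b, c⟩ - hne
    simp only [ite_mul, one_mul, zero_mul, ite_eq_right_iff]
    rintro ⟨rfl, rfl, rfl⟩
    exact absurd rfl hne
  · exact fun h => absurd (Finset.mem_univ _) h

lemma H_mulVec_tp3 {d : ℕ} (x y z : Fin d → ℂ) :
    (S12 d + S13 d) *ᵥ tp3 x y z = fun p => tp3 y x z p + tp3 z y x p := by
  rw [Matrix.add_mulVec, S12_mulVec, S13_mulVec]
  funext p
  simp [tp3]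
  ring

lemma key_exp {d : ℕ} (h0 : 0 < d) (t : ℝ) (ψ : Fin d → ℂ) :
    NormedSpace.exp ((-(Complex.I * (t : ℂ))) • (S12 d + S13 d)) *ᵥ
        tp3 ψ (e0vec d) (e0vec d) =
      fun p =>
        ψ ⟨0, h0⟩ * Complex.exp (-(Complex.I * (t : ℂ)) * 2) *
            tp3 (e0vec d) (e0vec d) (e0vec d) p +
        (Complex.exp (-(Complex.I * (t : ℂ)) * 2) + 2 * Complex.exp (Complex.I * (t : ℂ))) / 3 *
            tp3 (fun i => ψ i - ψ ⟨0, h0⟩ * e0vec d i) (e0vec d) (e0vec d) p +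
        (Complex.exp (-(Complex.I * (t : ℂ)) * 2) - Complex.exp (Complex.I * (t : ℂ))) / 3 *
            tp3 (e0vec d) (fun i => ψ i - ψ ⟨0, h0⟩ * e0vec d i) (e0vec d) p +
        (Complex.exp (-(Complex.I * (t : ℂ)) * 2) - Complex.exp (Complex.I * (t : ℂ))) / 3 *
            tp3 (e0vec d) (e0vec d) (fun i => ψ i - ψ ⟨0, h0⟩ * e0vec d i) p := by
  set e := e0vec d with he
  set c := ψ ⟨0, h0⟩ with hc
  set u : Fin d → ℂ := fun i => ψ i - c * e i with hu
  set M : Matrix (Fin d × Fin d × Fin d) (Fin d × Fin d × Fin d) ℂ :=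
    (-(Complex.I * (t : ℂ))) • (S12 d + S13 d) with hM
  have hsm : ∀ v : Fin d × Fin d × Fin d → ℂ,
      M *ᵥ v = (-(Complex.I * (t : ℂ))) • ((S12 d + S13 d) *ᵥ v) := fun v =>
    Matrix.smul_mulVec _ _ _
  have hE : M *ᵥ tp3 e e e = (-(Complex.I * (t : ℂ)) * 2) • tp3 e e e := by
    rw [hsm, H_mulVec_tp3]
    funext p
    simp [tp3, smul_eq_mul]
    ring
  have hWs : M *ᵥ (fun p => tp3 u e e p + tp3 e u e p + tp3 e e u p) =
      (-(Complex.I * (t : ℂ)) * 2) • (fun p => tp3 u e e p + tp3 e u e p + tp3 e e u p) := by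
    have h1 : (S12 d + S13 d) *ᵥ (fun p => tp3 u e e p + tp3 e u e p + tp3 e e u p)
        = ((S12 d + S13 d) *ᵥ tp3 u e e) + ((S12 d + S13 d) *ᵥ tp3 e u e)
          + ((S12 d + S13 d) *ᵥ tp3 e e u) := by
      rw [← Matrix.mulVec_add, ← Matrix.mulVec_add]
      rfl
    rw [hsm, h1, H_mulVec_tp3, H_mulVec_tp3, H_mulVec_tp3]
    funext p
    simp only [Pi.smul_apply, Pi.sub_apply, Pi.add_apply, smul_eq_mul]
    ring
  have hWm : M *ᵥ (fun p => 2 * tp3 u e e p - tp3 e u e p - tp3 e e u p) =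
      (Complex.I * (t : ℂ)) • (fun p => 2 * tp3 u e e p - tp3 e u e p - tp3 e e u p) := by
    have h1 : (fun p => 2 * tp3 u e e p - tp3 e u e p - tp3 e e u p)
        = (2 : ℂ) • tp3 u e e - tp3 e u e - tp3 e e u := by
      funext p; simp only [Pi.sub_apply, Pi.smul_apply, smul_eq_mul]
    rw [hsm, h1, Matrix.mulVec_sub, Matrix.mulVec_sub, Matrix.mulVec_smul,
      H_mulVec_tp3, H_mulVec_tp3, H_mulVec_tp3]
    funext p
    simp only [Pi.smul_apply, Pi.sub_apply, Pi.add_apply, smul_eq_mul]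
    ring
  have hdecomp : tp3 ψ e e = c • tp3 e e e
      + (3⁻¹ : ℂ) • (fun p => tp3 u e e p + tp3 e u e p + tp3 e e u p)
      + (3⁻¹ : ℂ) • (fun p => 2 * tp3 u e e p - tp3 e u e p - tp3 e e u p) := by
    funext p
    simp only [Pi.add_apply, Pi.smul_apply, smul_eq_mul, tp3, hu]
    ring
  rw [hdecomp, Matrix.mulVec_add, Matrix.mulVec_add, Matrix.mulVec_smul, Matrix.mulVec_smul,
    Matrix.mulVec_smul, exp_mulVec_eigen _ _ _ hE, exp_mulVec_eigen _ _ _ hWs,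
    exp_mulVec_eigen _ _ _ hWm]
  funext p
  simp only [Pi.smul_apply, Pi.add_apply, smul_eq_mul]
  ring

lemma e0_apply {d : ℕ} (h0 : 0 < d) (i : Fin d) :
    e0vec d i = if i = ⟨0, h0⟩ then 1 else 0 := by
  simp [e0vec, Fin.ext_iff]

lemma e0_at0 {d : ℕ} (h0 : 0 < d) : e0vec d ⟨0, h0⟩ = 1 := by
  simp [e0vec]

lemma sum_ite_split {d : ℕ} (i0 : Fin d) (X : ℂ) (Y : Fin d → ℂ) (hY : Y i0 = 0) :
    ∑ i, (if i = i0 then X else Y i) = X + ∑ i, Y i := by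
  have h : ∀ i : Fin d, (if i = i0 then X else Y i) = (if i = i0 then X else 0) + Y i := by
    intro i
    by_cases hi : i = i0
    · subst hi; simp [hY]
    · simp [hi]
  rw [Finset.sum_congr rfl fun i _ => h i, Finset.sum_add_distrib, Finset.sum_ite_eq']
  simp

lemma red_entry {d : ℕ} (h0 : 0 < d) (A a b : ℂ) (u : Fin d → ℂ) (hu : u ⟨0, h0⟩ = 0) :
    redSecond (fun p => A * tp3 (e0vec d) (e0vec d) (e0vec d) p + a * tp3 u (e0vec d) (e0vec d) p
        + b * tp3 (e0vec d) u (e0vec d) p + b * tp3 (e0vec d) (e0vec d) u p) ⟨0, h0⟩ ⟨0, h0⟩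
      = A * star A + (a * star a + b * star b) * ∑ i, u i * star (u i) := by
  set i0 : Fin d := ⟨0, h0⟩ with hi0
  have hv : ∀ i k : Fin d,
      (A * tp3 (e0vec d) (e0vec d) (e0vec d) (i, i0, k) + a * tp3 u (e0vec d) (e0vec d) (i, i0, k)
        + b * tp3 (e0vec d) u (e0vec d) (i, i0, k) + b * tp3 (e0vec d) (e0vec d) u (i, i0, k))
      = if i = i0 then (if k = i0 then A else b * u k) else (if k = i0 then a * u i else 0) := by
    intro i k
    by_cases hi : i = i0 <;> by_cases hk : k = i0 <;>
      simp +zetaDelta [tp3, e0_apply h0, hi, hk, hu, hi0]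
  simp only [redSecond, of_apply, hv]
  have inner : ∀ i : Fin d,
      (∑ k, (if i = i0 then (if k = i0 then A else b * u k) else (if k = i0 then a * u i else 0))
        * star (if i = i0 then (if k = i0 then A else b * u k)
            else (if k = i0 then a * u i else 0)))
      = if i = i0 then A * star A + (b * star b) * ∑ k, u k * star (u k)
        else (a * u i) * star (a * u i) := by
    intro i
    by_cases hi : i = i0
    · simp only [if_pos hi]
      have h1 : ∀ k : Fin d, (if k = i0 then A else b * u k) * star (if k = i0 then A else b * u k)
          = if k = i0 then A * star A else (b * u k) * star (b * u k) := by
        intro k; by_cases hk : k = i0 <;> simp [hk]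
      rw [Finset.sum_congr rfl fun k _ => h1 k,
        sum_ite_split i0 _ _ (by simp [hu])]
      congr 1
      rw [Finset.mul_sum]
      refine Finset.sum_congr rfl fun k _ => ?_
      simp only [star_mul']
      ring
    · simp only [if_neg hi]
      simp [Finset.sum_ite_eq']
  rw [Finset.sum_congr rfl fun i _ => inner i,
    sum_ite_split i0 _ _ (by simp [hu])]
  have h2 : ∑ i, (a * u i) * star (a * u i) = (a * star a) * ∑ i, u i * star (u i) := by
    rw [Finset.mul_sum]
    refine Finset.sum_congr rfl fun i _ => ?_
    simp only [star_mul']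
    ring
  rw [h2]
  ring

lemma red_const {d : ℕ} (h0 : 0 < d) (s : ℂ) (hs : s * star s = 1) (ψ : Fin d → ℂ)
    (hψ : ∑ i, ψ i * star (ψ i) = 1) :
    redSecond (fun p => s * tp3 ψ (e0vec d) (e0vec d) p)
      = Matrix.of fun j l => e0vec d j * e0vec d l := by
  ext j l
  simp only [redSecond, of_apply]
  have hpt : ∀ i k : Fin d,
      (s * tp3 ψ (e0vec d) (e0vec d) (i, j, k)) * star (s * tp3 ψ (e0vec d) (e0vec d) (i, l, k))
      = (if k = ⟨0, h0⟩ then (1 : ℂ) else 0) *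
          ((s * star s) * (ψ i * star (ψ i)) * (e0vec d j * e0vec d l)) := by
    intro i k
    by_cases hk : k = ⟨0, h0⟩ <;>
      · simp only [tp3, e0_apply h0, hk, if_true, if_false, star_mul', apply_ite (star), star_one,
          star_zero]
        by_cases hj : j = ⟨0, h0⟩ <;> by_cases hl : l = ⟨0, h0⟩ <;> simp [hj, hl] <;> ring
  rw [Finset.sum_congr rfl fun i _ => Finset.sum_congr rfl fun k _ => hpt i k]
  have hinner : ∀ i : Fin d, ∑ k : Fin d, (if k = ⟨0, h0⟩ then (1 : ℂ) else 0) *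
      ((s * star s) * (ψ i * star (ψ i)) * (e0vec d j * e0vec d l))
      = (s * star s) * (ψ i * star (ψ i)) * (e0vec d j * e0vec d l) := by
    intro i
    rw [← Finset.sum_mul, Finset.sum_ite_eq']
    simp
  rw [Finset.sum_congr rfl fun i _ => hinner i]
  rw [← Finset.sum_mul, ← Finset.mul_sum, hψ, mul_one, hs, one_mul]

lemma star_exp_c (z : ℂ) : star (Complex.exp z) = Complex.exp (star z) := by
  rw [Complex.star_def]; exact (Complex.exp_conj z).symm

lemma conj_It (t : ℝ) : star (Complex.I * (t : ℂ)) = -(Complex.I * (t : ℂ)) := by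
  rw [Complex.star_def, _root_.map_mul, Complex.conj_I, Complex.conj_ofReal]; ring

lemma alpha_mul_conj (t : ℝ) :
    Complex.exp (-(Complex.I * (t : ℂ)) * 2) * star (Complex.exp (-(Complex.I * (t : ℂ)) * 2))
      = 1 := by
  rw [star_exp_c, ← Complex.exp_add, show star (-(Complex.I * (t : ℂ)) * 2)
      = -(-(Complex.I * (t : ℂ)) * 2) from by
    rw [star_mul', star_neg, conj_It, show star (2:ℂ) = 2 from by simp]; ring]
  rw [add_neg_cancel, Complex.exp_zero]

lemma beta_mul_conj (t : ℝ) :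
    Complex.exp (Complex.I * (t : ℂ)) * star (Complex.exp (Complex.I * (t : ℂ))) = 1 := by
  rw [star_exp_c, conj_It, ← Complex.exp_add, add_neg_cancel, Complex.exp_zero]

lemma exp3_eq (t : ℝ) :
    Complex.exp (3 * Complex.I * (t : ℂ)) = Complex.exp (Complex.I * (t : ℂ)) ^ 3 := by
  rw [show (3 : ℂ) * Complex.I * (t : ℂ)
      = Complex.I * (t : ℂ) + (Complex.I * (t : ℂ) + Complex.I * (t : ℂ)) from by ring,
    Complex.exp_add, Complex.exp_add]
  ring

lemma main_ne (t : ℝ) (hz : Complex.exp (3 * Complex.I * (t : ℂ)) ≠ 1) :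
    (1 : ℂ) ≠
      (Complex.exp (-(Complex.I * (t : ℂ)) * 2) + 2 * Complex.exp (Complex.I * (t : ℂ))) / 3 *
        star ((Complex.exp (-(Complex.I * (t : ℂ)) * 2)
          + 2 * Complex.exp (Complex.I * (t : ℂ))) / 3)
      + (Complex.exp (-(Complex.I * (t : ℂ)) * 2) - Complex.exp (Complex.I * (t : ℂ))) / 3 *
        star ((Complex.exp (-(Complex.I * (t : ℂ)) * 2)
          - Complex.exp (Complex.I * (t : ℂ))) / 3) := by
  intro heq
  set w : ℂ := Complex.exp (Complex.I * (t : ℂ)) with hw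
  set α : ℂ := Complex.exp (-(Complex.I * (t : ℂ)) * 2) with hα
  have hw0 : w ≠ 0 := Complex.exp_ne_zero _
  have hw3 : w ^ 3 ≠ 1 := by rw [← exp3_eq]; exact hz
  have h1 : α * w ^ 2 = 1 := by
    rw [hα, hw, pow_two, ← Complex.exp_add, ← Complex.exp_add,
      show -(Complex.I * (t : ℂ)) * 2 + (Complex.I * (t : ℂ) + Complex.I * (t : ℂ)) = 0 from by
        ring, Complex.exp_zero]
  have h2 : star α = w ^ 2 := by
    rw [hα, hw, star_exp_c, pow_two, ← Complex.exp_add]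
    congr 1
    rw [star_mul', star_neg, conj_It, show star (2:ℂ) = 2 from by simp]
    ring
  have h3 : star w = w⁻¹ :=
    eq_inv_of_mul_eq_one_left (by rw [mul_comm]; exact beta_mul_conj t)
  have h4 : α = (w ^ 2)⁻¹ := eq_inv_of_mul_eq_one_left h1
  simp only [star_div₀, star_add, star_sub, star_mul', star_ofNat, h2, h3] at heq
  rw [h4] at heq
  field_simp at heq
  have hsq : (w ^ 3 - 1) ^ 2 = 0 := by linear_combination -heq
  have h5 : w ^ 3 - 1 = 0 := sq_eq_zero_iff.mp hsq
  exact hw3 (sub_eq_zero.mp h5)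

/-- The simultaneous-swap procedure is a measurement by observer A (its reduced memory state
distinguishes two initial pure system states) iff `e^{3it} ≠ 1`; in particular, when
`e^{3it} ≠ 1` the initial states `|0⟩` and `|ψ'⟩` produce different memory states. -/
theorem stmt_18 (d : ℕ) (hd : 2 ≤ d) (ψ' : Fin d → ℂ)
    (hψ' : star ψ' ⬝ᵥ ψ' = 1) (horth : star (e0vec d) ⬝ᵥ ψ' = 0) (t : ℝ) :
    ((∃ ψ φ : Fin d → ℂ, star ψ ⬝ᵥ ψ = 1 ∧ star φ ⬝ᵥ φ = 1 ∧
        redSecond (NormedSpace.exp ((-(Complex.I * (t : ℂ))) • (S12 d + S13 d)) *ᵥ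
            tp3 ψ (e0vec d) (e0vec d)) ≠
          redSecond (NormedSpace.exp ((-(Complex.I * (t : ℂ))) • (S12 d + S13 d)) *ᵥ
            tp3 φ (e0vec d) (e0vec d))) ↔
      Complex.exp (3 * Complex.I * (t : ℂ)) ≠ 1) ∧
    (Complex.exp (3 * Complex.I * (t : ℂ)) ≠ 1 →
      redSecond (NormedSpace.exp ((-(Complex.I * (t : ℂ))) • (S12 d + S13 d)) *ᵥ
          tp3 (e0vec d) (e0vec d) (e0vec d)) ≠
        redSecond (NormedSpace.exp ((-(Complex.I * (t : ℂ))) • (S12 d + S13 d)) *ᵥ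
          tp3 ψ' (e0vec d) (e0vec d))) := by
  have h0 : 0 < d := by omega
  have hc0 : ψ' ⟨0, h0⟩ = 0 := by
    simpa [dotProduct, e0_apply h0, apply_ite (star : ℂ → ℂ), ite_mul,
      Finset.sum_ite_eq'] using horth
  have he0unit : star (e0vec d) ⬝ᵥ e0vec d = 1 := by
    simp [dotProduct, e0_apply h0, apply_ite (star : ℂ → ℂ), ite_mul, mul_ite,
      Finset.sum_ite_eq']
  have hS2 : ∑ i, ψ' i * star (ψ' i) = 1 := by
    rw [← hψ']
    simp only [dotProduct, Pi.star_apply]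
    exact Finset.sum_congr rfl fun i _ => mul_comm _ _
  have part2 : Complex.exp (3 * Complex.I * (t : ℂ)) ≠ 1 →
      redSecond (NormedSpace.exp ((-(Complex.I * (t : ℂ))) • (S12 d + S13 d)) *ᵥ
          tp3 (e0vec d) (e0vec d) (e0vec d)) ≠
        redSecond (NormedSpace.exp ((-(Complex.I * (t : ℂ))) • (S12 d + S13 d)) *ᵥ
          tp3 ψ' (e0vec d) (e0vec d)) := by
    intro hz hEq
    have hent := congrFun (congrFun hEq ⟨0, h0⟩) ⟨0, h0⟩
    rw [key_exp h0 t (e0vec d), key_exp h0 t ψ'] at hent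
    have hA1 := red_entry h0 (e0vec d ⟨0, h0⟩ * Complex.exp (-(Complex.I * (t : ℂ)) * 2))
      ((Complex.exp (-(Complex.I * (t : ℂ)) * 2) + 2 * Complex.exp (Complex.I * (t : ℂ))) / 3)
      ((Complex.exp (-(Complex.I * (t : ℂ)) * 2) - Complex.exp (Complex.I * (t : ℂ))) / 3)
      (fun i => e0vec d i - e0vec d ⟨0, h0⟩ * e0vec d i) (by simp [e0_at0 h0])
    have hA2 := red_entry h0 (ψ' ⟨0, h0⟩ * Complex.exp (-(Complex.I * (t : ℂ)) * 2))
      ((Complex.exp (-(Complex.I * (t : ℂ)) * 2) + 2 * Complex.exp (Complex.I * (t : ℂ))) / 3)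
      ((Complex.exp (-(Complex.I * (t : ℂ)) * 2) - Complex.exp (Complex.I * (t : ℂ))) / 3)
      (fun i => ψ' i - ψ' ⟨0, h0⟩ * e0vec d i) (by simp [e0_at0 h0])
    rw [hA1, hA2] at hent
    simp only [e0_at0 h0, hc0, one_mul, zero_mul, sub_zero, sub_self, mul_zero, zero_add,
      add_zero, star_zero, Finset.sum_const_zero] at hent
    rw [alpha_mul_conj t, hS2, mul_one] at hent
    exact main_ne t hz hent
  have const : Complex.exp (3 * Complex.I * (t : ℂ)) = 1 → ∀ χ : Fin d → ℂ,
      star χ ⬝ᵥ χ = 1 →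
      redSecond (NormedSpace.exp ((-(Complex.I * (t : ℂ))) • (S12 d + S13 d)) *ᵥ
          tp3 χ (e0vec d) (e0vec d)) = Matrix.of fun j l => e0vec d j * e0vec d l := by
    intro hz1 χ hχ
    have hαβ : Complex.exp (-(Complex.I * (t : ℂ)) * 2) = Complex.exp (Complex.I * (t : ℂ)) := by
      have h := Complex.exp_add (-(Complex.I * (t : ℂ)) * 2) (3 * Complex.I * (t : ℂ))
      rw [hz1, mul_one] at h
      rw [show -(Complex.I * (t : ℂ)) * 2 + 3 * Complex.I * (t : ℂ)
          = Complex.I * (t : ℂ) from by ring] at h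
      exact h.symm
    have hχsum : ∑ i, χ i * star (χ i) = 1 := by
      rw [← hχ]
      simp only [dotProduct, Pi.star_apply]
      exact Finset.sum_congr rfl fun i _ => mul_comm _ _
    have hv : NormedSpace.exp ((-(Complex.I * (t : ℂ))) • (S12 d + S13 d)) *ᵥ
        tp3 χ (e0vec d) (e0vec d)
        = fun p => Complex.exp (Complex.I * (t : ℂ)) * tp3 χ (e0vec d) (e0vec d) p := by
      rw [key_exp h0 t χ]
      funext p
      rw [hαβ]
      simp only [tp3]
      ring
    rw [hv, red_const h0 _ (beta_mul_conj t) χ hχsum]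
  refine ⟨⟨fun hex => ?_, fun hz => ⟨e0vec d, ψ', he0unit, hψ', part2 hz⟩⟩, part2⟩
  by_contra hz1
  obtain ⟨ψ, φ, hψ, hφ, hne⟩ := hex
  exact hne ((const hz1 ψ hψ).trans (const hz1 φ hφ).symm)


end
end
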